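/- arXiv:2203.13899 — 4 statements merged into one kernel-verified Lean document; each statement's English description precedes it below -/
import Mathlib

section
/- Let M* be a finite set of edges with weights w : E → ℚ≥0 and k ≤ |M*|. Set t = w^k(M*)/(2k). If M is any set of edges with w_t(M) ≥ w_t(M*) (e.g., a maximum weight perfect matching under thresholded weights), then w^k(M) ≥ (1/2)·w^k(M*). (Case analysis: if at most k edges of M have positive thresholded weight then w^k(M) ≥ w_t(M) ≥ w_t(M*) ≥ w^k(M*) − k·t = (1/2)w^k(M*); otherwise M contains at least k edges of weight more than t, so w^k(M) ≥ k·t = (1/2)w^k(M*).) -/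
/-- The top-`k` weight of a multiset of rationals: the sum of its `k` largest elements. -/
def topkQ (S : Multiset ℚ) (k : ℕ) : ℚ :=
  ((S.sort (· ≤ ·)).reverse.take k).sum



lemma take_succ_sum_le (a : ℚ) : ∀ (l : List ℚ) (m : ℕ), (∀ x ∈ l, x ≤ a) → 0 ≤ a →
    (l.take (m+1)).sum ≤ (l.take m).sum + a := by
  intro l
  induction l with
  | nil => intro m _ ha; simp [ha]
  | cons x l ih =>
    intro m h ha
    cases m with
    | zero => simpa using h x (by simp)
    | succ m =>
      have := ih m (fun y hy => h y (by simp [hy])) ha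
      simp only [List.take_succ_cons, List.sum_cons]
      linarith

lemma sublist_sum_le_take : ∀ {s r : List ℚ}, List.Sublist s r → List.Pairwise (· ≥ ·) r →
    (∀ x ∈ r, 0 ≤ x) → s.sum ≤ (r.take s.length).sum := by
  intro s r hs
  induction hs with
  | slnil => simp
  | @cons l₁ l₂ a h ih =>
    intro hr h0
    have hr' : List.Pairwise (· ≥ ·) l₂ := hr.of_cons
    have h0' : ∀ x ∈ l₂, 0 ≤ x := fun x hx => h0 x (List.mem_cons_of_mem _ hx)
    have H := ih hr' h0'
    cases hm : l₁.length with
    | zero => simp [List.length_eq_zero_iff.mp hm]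
    | succ m =>
      rw [hm] at H
      have ha : ∀ x ∈ l₂, x ≤ a := fun x hx => List.rel_of_pairwise_cons hr hx
      have ha0 : 0 ≤ a := h0 a (by simp)
      have := take_succ_sum_le a l₂ m ha ha0
      simp only [List.take_succ_cons, List.sum_cons]
      linarith
  | @cons_cons l₁ l₂ a h ih =>
    intro hr h0
    have H := ih hr.of_cons (fun x hx => h0 x (List.mem_cons_of_mem _ hx))
    simp only [List.length_cons, List.take_succ_cons, List.sum_cons]
    linarith

lemma take_sum_mono {l : List ℚ} (h0 : ∀ x ∈ l, 0 ≤ x) {m k : ℕ} (hmk : m ≤ k) :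
    (l.take m).sum ≤ (l.take k).sum := by
  have h1 : l.take m = (l.take k).take m := by rw [List.take_take, min_eq_left hmk]
  have h2 : ((l.take k).drop m).sum ≥ 0 := by
    apply List.sum_nonneg
    intro x hx
    exact h0 x (List.mem_of_mem_take (List.mem_of_mem_drop hx))
  calc (l.take m).sum = ((l.take k).take m).sum := by rw [h1]
    _ ≤ ((l.take k).take m).sum + ((l.take k).drop m).sum := by linarith
    _ = (l.take k).sum := by rw [← List.sum_append, List.take_append_drop]

lemma sorted_desc (S : Multiset ℚ) : List.Pairwise (· ≥ ·) (S.sort (· ≤ ·)).reverse := by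
  rw [List.pairwise_reverse]
  exact Multiset.pairwise_sort S (· ≤ ·)

lemma lemA {S T : Multiset ℚ} (h0 : ∀ x ∈ S, 0 ≤ x) (hT : T ≤ S) {k : ℕ}
    (hk : Multiset.card T ≤ k) : T.sum ≤ topkQ S k := by
  set r := (S.sort (· ≤ ·)).reverse with hr
  set s := (T.sort (· ≤ ·)).reverse with hs
  have hrS : (↑r : Multiset ℚ) = S := by
    rw [hr]; rw [← Multiset.coe_reverse]; simp [Multiset.sort_eq]
  have hsT : (↑s : Multiset ℚ) = T := by
    rw [hs]; rw [← Multiset.coe_reverse]; simp [Multiset.sort_eq]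
  have hsub : s.Subperm r := by
    rw [← Multiset.coe_le, hrS, hsT]; exact hT
  have hsl : List.Sublist s r :=
    List.sublist_of_subperm_of_pairwise hsub (sorted_desc T) (sorted_desc S)
  have h0r : ∀ x ∈ r, 0 ≤ x := fun x hx => h0 x (by rw [← hrS]; exact_mod_cast hx)
  have H := sublist_sum_le_take hsl (sorted_desc S) h0r
  have hlen : s.length = Multiset.card T := by
    rw [← hsT]; simp
  have := take_sum_mono h0r (hlen ▸ hk : s.length ≤ k)
  have hsum : s.sum = T.sum := by rw [← hsT]; simp
  calc T.sum = s.sum := hsum.symm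
    _ ≤ (r.take s.length).sum := H
    _ ≤ (r.take k).sum := this



lemma coe_rev_sort (S : Multiset ℚ) : ((S.sort (· ≤ ·)).reverse : Multiset ℚ) = S := by
  rw [← Multiset.coe_reverse]; simp [Multiset.sort_eq]

lemma sum_map_add_const (l : List ℚ) (f : ℚ → ℚ) (t : ℚ) :
    (l.map (fun x => f x + t)).sum = (l.map f).sum + l.length * t := by
  induction l with
  | nil => simp
  | cons x l ih => simp [ih]; ring

lemma lemB (S : Multiset ℚ) (t : ℚ) (k : ℕ) (hk : k ≤ Multiset.card S) :
    topkQ S k ≤ (S.map (fun x => max (x - t) 0)).sum + k * t := by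
  set f : ℚ → ℚ := fun x => max (x - t) 0 with hf
  set r := (S.sort (· ≤ ·)).reverse with hr
  have hrS : (↑r : Multiset ℚ) = S := coe_rev_sort S
  have hlenr : r.length = Multiset.card S := by
    rw [← hrS, Multiset.coe_card]
  have hlen : (r.take k).length = k := by
    rw [List.length_take, hlenr]; omega
  have step1 : (r.take k).sum ≤ ((r.take k).map f).sum + k * t := by
    have h1 : (r.take k).sum = ((r.take k).map id).sum := by simp
    have h2 : ((r.take k).map id).sum ≤ ((r.take k).map (fun x => f x + t)).sum := by
      apply List.sum_le_sum
      intro x _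
      have : x - t ≤ f x := le_max_left _ _
      simp only [id]; linarith
    rw [sum_map_add_const, hlen] at h2
    linarith [h1 ▸ h2]
  have step2 : ((r.take k).map f).sum ≤ (r.map f).sum := by
    conv_rhs => rw [← List.take_append_drop k r]
    rw [List.map_append, List.sum_append]
    have : 0 ≤ ((r.drop k).map f).sum := by
      apply List.sum_nonneg
      intro x hx
      simp only [List.mem_map] at hx
      obtain ⟨y, _, rfl⟩ := hx
      exact le_max_right _ _
    linarith
  have step3 : (r.map f).sum = (S.map f).sum := by
    rw [← hrS]; simp
  calc topkQ S k = (r.take k).sum := rfl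
    _ ≤ ((r.take k).map f).sum + k * t := step1
    _ ≤ (r.map f).sum + k * t := by linarith
    _ = (S.map f).sum + k * t := by rw [step3]




/-- Lemma `goodthreshold`: with threshold `t = w^k(M*)/(2k)`, any edge set whose total
thresholded weight is at least that of `M*` has top-`k` weight at least half that of `M*`. -/
theorem stmt_4 {E : Type*} [DecidableEq E] (w : E → ℚ) (hw : ∀ e, 0 ≤ w e)
    (Mstar M : Finset E) (k : ℕ) (hk : k ≤ Mstar.card)
    (t : ℚ) (ht : t = topkQ (Mstar.val.map w) k / (2 * k))
    (hM : ∑ e ∈ Mstar, max (w e - t) 0 ≤ ∑ e ∈ M, max (w e - t) 0) :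
    (1 / 2) * topkQ (Mstar.val.map w) k ≤ topkQ (M.val.map w) k := by
  rcases Nat.eq_zero_or_pos k with rfl | hk0
  · simp [topkQ]
  set f : ℚ → ℚ := fun x => max (x - t) 0 with hf
  set Sstar := Mstar.val.map w with hSstar
  set S := M.val.map w with hS
  set A := topkQ Sstar k with hA
  have h0star : ∀ x ∈ Sstar, 0 ≤ x := by
    intro x hx; rw [hSstar] at hx; simp only [Multiset.mem_map] at hx
    obtain ⟨e, _, rfl⟩ := hx; exact hw e
  have h0S : ∀ x ∈ S, 0 ≤ x := by
    intro x hx; rw [hS] at hx; simp only [Multiset.mem_map] at hx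
    obtain ⟨e, _, rfl⟩ := hx; exact hw e
  -- A ≥ 0
  have hA0 : 0 ≤ A := by
    have := lemA h0star (Multiset.zero_le Sstar) (k := k) (by simp)
    simpa using this
  have hkq : (0:ℚ) < (k:ℚ) := by exact_mod_cast hk0
  have ht0 : 0 ≤ t := by
    rw [ht]; positivity
  have hkt : (k:ℚ) * t = A / 2 := by
    rw [ht]; field_simp
  -- multiset-sum versions of the Finset sums
  have hWstar : (Sstar.map f).sum = ∑ e ∈ Mstar, max (w e - t) 0 := by
    rw [hSstar, Multiset.map_map, Finset.sum]
    rfl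
  have hW : (S.map f).sum = ∑ e ∈ M, max (w e - t) 0 := by
    rw [hS, Multiset.map_map, Finset.sum]
    rfl
  -- Lemma B: A ≤ w_t(M*) + k t, hence w_t(M) ≥ A/2
  have hcard : k ≤ Multiset.card Sstar := by
    rw [hSstar]; simpa using hk
  have hB := lemB Sstar t k hcard
  rw [← hf, ← hA, hkt] at hB
  have hWhalf : A / 2 ≤ (S.map f).sum := by
    rw [hW]; rw [hWstar] at hB; linarith
  -- case split on number of edges above the threshold
  set P := S.filter (fun x => t < x) with hP
  by_cases hc : Multiset.card P ≤ k
  · -- few big edges: (S.map f).sum ≤ P.sum ≤ topkQ S k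
    have hsplit : (S.map f).sum = (P.map f).sum + ((S.filter (fun x => ¬ t < x)).map f).sum := by
      conv_lhs => rw [← Multiset.filter_add_not (fun x => t < x) S]
      rw [Multiset.map_add, Multiset.sum_add]
    have hzero : ((S.filter (fun x => ¬ t < x)).map f).sum = 0 := by
      apply Multiset.sum_eq_zero
      intro x hx
      simp only [Multiset.mem_map, Multiset.mem_filter] at hx
      obtain ⟨y, ⟨_, hy⟩, rfl⟩ := hx
      show max (y - t) 0 = 0
      exact max_eq_right (sub_nonpos.mpr (le_of_not_gt hy))
    have hPf : (P.map f).sum ≤ P.sum := by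
      have := Multiset.sum_map_le_sum_map (s := P) f id (by
        intro x hx
        rw [hP, Multiset.mem_filter] at hx
        have hxt : t < x := hx.2
        show max (x - t) 0 ≤ x
        apply max_le <;> linarith)
      simpa using this
    have hPle : P.sum ≤ topkQ S k := lemA h0S (Multiset.filter_le _ S) hc
    have : A / 2 ≤ topkQ S k := by
      rw [hsplit, hzero] at hWhalf; linarith
    linarith
  · -- many big edges: topkQ S k ≥ k t = A/2
    push_neg at hc
    set l := P.toList.take k with hl
    have hlP : (↑l : Multiset ℚ) ≤ P := by
      rw [← Multiset.coe_toList P]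
      exact Multiset.coe_le.mpr (List.take_sublist _ _).subperm
    have hlS : (↑l : Multiset ℚ) ≤ S := le_trans hlP (Multiset.filter_le _ S)
    have hllen : l.length = k := by
      rw [hl, List.length_take, Multiset.length_toList]
      omega
    have hcardl : Multiset.card (↑l : Multiset ℚ) ≤ k := by
      rw [Multiset.coe_card, hllen]
    have hlsum : (k:ℚ) * t ≤ (↑l : Multiset ℚ).sum := by
      have hmem : ∀ x ∈ l, t ≤ x := by
        intro x hx
        have : x ∈ P := by
          have hxl : x ∈ P.toList := (List.take_sublist k P.toList).subset hx
          exact Multiset.mem_toList.mp hxl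
        rw [hP, Multiset.mem_filter] at this
        linarith [this.2]
      have h := List.sum_le_sum (l := l) (f := fun _ => t) (g := id) (fun x hx => hmem x hx)
      simp only [List.map_const', List.sum_replicate, List.map_id, smul_eq_mul, hllen] at h
      simpa [Multiset.sum_coe] using h
    have := lemA h0S hlS hcardl
    rw [hkt] at hlsum
    linarith
end

section
/- Let M be a perfect matching in a graph G with independence number α and edges colored red/blue, and let 𝒞 be a set of vertex-disjoint M-alternating cycles whose set R of red edges has size k. Then G contains a set 𝒞′ of vertex-disjoint M-alternating cycles such that R ⊆ E(𝒞′), |E(𝒞′)| ≤ k·4^{α+1}, and every edge of E(𝒞′) \ E(𝒞) is a non-matching edge. -/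
/-- The `i`-th edge of the cycle given by the vertex list `c` (indices taken cyclically). -/
def cEdge {V : Type*} [Inhabited V] (c : List V) (i : ℕ) : Sym2 V :=
  s(c.getD i default, c.getD ((i + 1) % c.length) default)

/-- The edge set of the cycle given by the vertex list `c`. -/
def cEdges {V : Type*} [Inhabited V] [DecidableEq V] (c : List V) : Finset (Sym2 V) :=
  ((List.range c.length).map (cEdge c)).toFinset

/-- `c` is (a normalized representation of) an `M`-alternating cycle in `G`:
a list of distinct vertices, of even length at least 4, whose consecutive (cyclic)
edges are edges of `G` and belong to `M` exactly at even positions. -/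
def AltCycle {V : Type*} [Inhabited V] (G : SimpleGraph V) (M : Set (Sym2 V))
    (c : List V) : Prop :=
  c.Nodup ∧ 4 ≤ c.length ∧ c.length % 2 = 0 ∧
    ∀ i < c.length, cEdge c i ∈ G.edgeSet ∧ (cEdge c i ∈ M ↔ i % 2 = 0)

/-- The edges of a set of cycles. -/
def Ecyc {V : Type*} [Inhabited V] [DecidableEq V] (𝒞 : Finset (List V)) :
    Finset (Sym2 V) :=
  𝒞.biUnion cEdges

set_option linter.unusedSectionVars false
namespace CS

variable {V : Type*} [Inhabited V] [DecidableEq V]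

/-- junk pair -/
abbrev jk : V × V := default

/-- flatten a list of pairs -/
def toL : List (V × V) → List V
  | [] => []
  | p :: l => p.1 :: p.2 :: toL l

@[simp] lemma toL_nil : toL ([] : List (V × V)) = [] := rfl

@[simp] lemma toL_cons (p : V × V) (l : List (V × V)) :
    toL (p :: l) = p.1 :: p.2 :: toL l := rfl

@[simp] lemma toL_append (l₁ l₂ : List (V × V)) :
    toL (l₁ ++ l₂) = toL l₁ ++ toL l₂ := by
  induction l₁ with
  | nil => rfl
  | cons p l ih => simp [toL, ih]

@[simp] lemma toL_length (l : List (V × V)) : (toL l).length = 2 * l.length := by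
  induction l with
  | nil => rfl
  | cons p l ih => simp [toL, ih]; ring

lemma toL_reverse_swap (l : List (V × V)) :
    toL ((l.map Prod.swap).reverse) = (toL l).reverse := by
  induction l with
  | nil => rfl
  | cons p l ih => simp [toL, ih]

lemma toL_sublist {l₁ l₂ : List (V × V)} (h : l₁.Sublist l₂) :
    (toL l₁).Sublist (toL l₂) := by
  induction h with
  | slnil => simp
  | cons a _ ih => exact ih.trans (((toL _).sublist_cons_self a.2).trans
      ((a.2 :: toL _).sublist_cons_self a.1))
  | cons_cons a _ ih => exact (ih.cons₂ a.2).cons₂ a.1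

lemma toL_getD_even (l : List (V × V)) (i : ℕ) (h : i < l.length) (d : V) :
    (toL l).getD (2 * i) d = (l.getD i jk).1 := by
  induction l generalizing i with
  | nil => simp at h
  | cons p l ih =>
    cases i with
    | zero => simp [toL]
    | succ j =>
      have : 2 * (j + 1) = (2 * j) + 1 + 1 := by ring
      rw [this]
      simp only [toL_cons, List.getD_cons_succ]
      exact ih j (by simpa using h) 

lemma toL_getD_odd (l : List (V × V)) (i : ℕ) (h : i < l.length) (d : V) :
    (toL l).getD (2 * i + 1) d = (l.getD i jk).2 := by
  induction l generalizing i with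
  | nil => simp at h
  | cons p l ih =>
    cases i with
    | zero => simp [toL]
    | succ j =>
      have : 2 * (j + 1) + 1 = (2 * j + 1) + 1 + 1 := by ring
      rw [this]
      simp only [toL_cons, List.getD_cons_succ]
      exact ih j (by simpa using h)

/-- unflatten -/
def toP : List V → List (V × V)
  | a :: b :: l => (a, b) :: toP l
  | _ => []

lemma toP_induct {motive : List V → Prop} (h0 : motive [])
    (h1 : ∀ a, motive [a]) (h2 : ∀ a b l, motive l → motive (a :: b :: l)) :
    ∀ c, motive c := by
  intro c
  have key : ∀ n (c : List V), c.length ≤ n → motive c := by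
    intro n
    induction n with
    | zero =>
      intro c hc
      have : c = [] := List.length_eq_zero_iff.mp (by omega)
      subst this; exact h0
    | succ n ih =>
      intro c hc
      match c with
      | [] => exact h0
      | [a] => exact h1 a
      | a :: b :: l => exact h2 a b l (ih l (by simp at hc; omega))
  exact key c.length c le_rfl

lemma toL_toP (c : List V) (h : c.length % 2 = 0) : toL (toP c) = c := by
  induction c using toP_induct with
  | h0 => simp [toP]
  | h1 a => simp at h
  | h2 a b l ih => simp only [toP, toL_cons]; rw [ih (by simp at h ⊢; omega)]

@[simp] lemma toP_length (c : List V) : (toP c).length = c.length / 2 := by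
  induction c using toP_induct with
  | h0 => simp [toP]
  | h1 a => simp [toP]
  | h2 a b l ih => simp only [toP, List.length_cons, ih]; omega

lemma toP_getD (c : List V) (j : ℕ) (h : 2 * j + 1 < c.length) :
    (toP c).getD j jk = (c.getD (2 * j) default, c.getD (2 * j + 1) default) := by
  induction c using toP_induct generalizing j with
  | h0 => simp at h
  | h1 a => simp at h
  | h2 a b l ih =>
    cases j with
    | zero => simp [toP]
    | succ i =>
      have e1 : 2 * (i + 1) = (2 * i) + 1 + 1 := by ring
      have e2 : 2 * (i + 1) + 1 = (2 * i + 1) + 1 + 1 := by ring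
      rw [e2, e1]
      simp only [toP, List.getD_cons_succ]
      exact ih i (by simp at h ⊢; omega)

end CS

section SecB
variable {V : Type*} [Inhabited V] [DecidableEq V]
set_option linter.unusedSectionVars false

namespace CS

lemma head?_ne {β : Type*} [Inhabited β] (l : List β) (h : l ≠ []) : l.head? = some l.headI := by
  cases l with
  | nil => exact absurd rfl h
  | cons a l => rfl

lemma headI_eq_getD {β : Type*} [Inhabited β] (l : List β) (h : l ≠ []) (d : β) :
    l.headI = l.getD 0 d := by
  cases l with
  | nil => exact absurd rfl h
  | cons a l => rfl

lemma getLast?_ne (l : List (V × V)) (h : l ≠ []) :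
    l.getLast? = some (l.getLastD jk) := by
  rw [List.getLastD_eq_getLast?, List.getLast?_eq_getLast h]
  rfl

lemma getLastD_eq_getD {β : Type*} (l : List β) (h : l ≠ []) (d : β) :
    l.getLastD d = l.getD (l.length - 1) d := by
  induction l generalizing d with
  | nil => exact absurd rfl h
  | cons a l ih =>
    cases l with
    | nil => rfl
    | cons b m =>
      rw [List.getLastD_cons, ih (by simp) a]
      have h1 : (b :: m).length - 1 < (b :: m).length := by simp
      have h2 : (a :: b :: m).length - 1 = ((b :: m).length - 1) + 1 := by simp
      rw [h2, List.getD_cons_succ, List.getD_eq_getElem _ _ h1, List.getD_eq_getElem _ _ h1]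

lemma headI_append {β : Type*} [Inhabited β] (l l' : List β) (h : l ≠ []) :
    (l ++ l').headI = l.headI := by
  cases l with
  | nil => exact absurd rfl h
  | cons a t => rfl

lemma getLastD_append {β : Type*} (l l' : List β) (h : l' ≠ []) (d : β) :
    (l ++ l').getLastD d = l'.getLastD d := by
  rw [List.getLastD_eq_getLast?, List.getLastD_eq_getLast?, List.getLast?_append,
    List.getLast?_eq_getLast h]
  rfl

variable (G : SimpleGraph V) (M : Set (Sym2 V))

/-- connector relation between dominoes -/
def Conn (p q : V × V) : Prop := s(p.2, q.1) ∈ G.edgeSet ∧ s(p.2, q.1) ∉ M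

/-- pair-list representation of an alternating cycle -/
structure PC (P : List (V × V)) : Prop where
  len : 2 ≤ P.length
  nodup : (toL P).Nodup
  pmem : ∀ p ∈ P, s(p.1, p.2) ∈ G.edgeSet ∧ s(p.1, p.2) ∈ M
  chain : P.Chain' (Conn G M)
  wrap : Conn G M (P.getLastD jk) P.headI

variable {G M}

lemma chain_getD {P : List (V × V)} (h : P.Chain' (Conn G M)) (j : ℕ)
    (hj : j + 1 < P.length) : Conn G M (P.getD j jk) (P.getD (j+1) jk) := by
  rw [List.getD_eq_getElem _ _ (by omega), List.getD_eq_getElem _ _ hj]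
  have := List.isChain_iff_getElem.mp h j (by omega)
  simpa using this

lemma cEdge_toL_even (P : List (V × V)) (j : ℕ) (hj : j < P.length) :
    cEdge (toL P) (2 * j) = s((P.getD j jk).1, (P.getD j jk).2) := by
  unfold cEdge
  have hlen : (toL P).length = 2 * P.length := toL_length P
  have h1 : (2 * j + 1) % (toL P).length = 2 * j + 1 := by
    rw [hlen]; exact Nat.mod_eq_of_lt (by omega)
  rw [h1, toL_getD_even P j hj, toL_getD_odd P j hj]

lemma cEdge_toL_odd (P : List (V × V)) (j : ℕ) (hj : j < P.length) :
    cEdge (toL P) (2 * j + 1) =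
      s((P.getD j jk).2, (P.getD ((j + 1) % P.length) jk).1) := by
  unfold cEdge
  have hlen : (toL P).length = 2 * P.length := toL_length P
  rw [toL_getD_odd P j hj]
  rcases Nat.lt_or_ge (j+1) P.length with hlt | hge
  · have h1 : (2 * j + 1 + 1) % (toL P).length = 2 * (j+1) := by
      rw [hlen]; rw [Nat.mod_eq_of_lt (by omega)]; ring
    rw [h1, toL_getD_even P (j+1) hlt, Nat.mod_eq_of_lt hlt]
  · have hj1 : j + 1 = P.length := by omega
    have h1 : (2 * j + 1 + 1) % (toL P).length = 0 := by
      rw [hlen]; have : 2 * j + 1 + 1 = 2 * P.length := by omega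
      rw [this]; simp
    have h2 : (j + 1) % P.length = 0 := by rw [hj1]; simp
    rw [h1, h2, toL_getD_even P 0 (by omega)]

lemma PC.altCycle {P : List (V × V)} (h : PC G M P) : AltCycle G M (toL P) := by
  obtain ⟨hlen, hnd, hpm, hch, hwr⟩ := h
  have hn : 0 < P.length := by omega
  refine ⟨hnd, by rw [toL_length]; omega, by rw [toL_length]; omega, ?_⟩
  intro i hi
  rw [toL_length] at hi
  rcases Nat.even_or_odd i with ⟨j, hj⟩ | ⟨j, hj⟩
  · have hij : i = 2 * j := by omega
    subst hij
    have hjn : j < P.length := by omega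
    rw [cEdge_toL_even P j hjn]
    have hmem : P.getD j jk ∈ P := by
      rw [List.getD_eq_getElem _ _ hjn]; exact List.getElem_mem _
    obtain ⟨he, hm⟩ := hpm _ hmem
    exact ⟨he, iff_of_true hm (by omega)⟩
  · have hij : i = 2 * j + 1 := by omega
    subst hij
    have hjn : j < P.length := by omega
    rw [cEdge_toL_odd P j hjn]
    have hconn : Conn G M (P.getD j jk) (P.getD ((j+1) % P.length) jk) := by
      rcases Nat.lt_or_ge (j+1) P.length with hlt | hge
      · rw [Nat.mod_eq_of_lt hlt]; exact chain_getD hch j hlt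
      · have hj1 : j + 1 = P.length := by omega
        have h2 : (j + 1) % P.length = 0 := by rw [hj1]; simp
        rw [h2]
        have hP : P ≠ [] := by intro h'; rw [h'] at hn; simp at hn
        rw [← headI_eq_getD P hP jk]
        have : P.getD j jk = P.getLastD jk := by
          rw [getLastD_eq_getD P hP jk]; congr 1; omega
        rw [this]; exact hwr
    exact ⟨hconn.1, by constructor <;> intro h' <;> [exact absurd h' hconn.2; omega]⟩

lemma altCycle_PC {c : List V} (h : AltCycle G M c) : PC G M (toP c) := by
  obtain ⟨hnd, hlen, hpar, hedge⟩ := h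
  have htl : toL (toP c) = c := toL_toP c hpar
  have hn : (toP c).length = c.length / 2 := toP_length c
  constructor
  · omega
  · rw [htl]; exact hnd
  · intro p hp
    rw [List.mem_iff_getElem] at hp
    obtain ⟨j, hj, hpj⟩ := hp
    rw [← List.getD_eq_getElem _ jk hj] at hpj
    rw [hn] at hj
    have h2j : 2 * j + 1 < c.length := by omega
    rw [toP_getD c j h2j] at hpj
    have := hedge (2 * j) (by omega)
    rw [cEdge] at this
    have hmod : (2 * j + 1) % c.length = 2 * j + 1 := Nat.mod_eq_of_lt h2j
    rw [hmod] at this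
    subst hpj
    exact ⟨this.1, this.2.mpr (by omega)⟩
  · unfold List.Chain'; rw [List.isChain_iff_getElem]
    intro j hj
    rw [← List.getD_eq_getElem _ jk (by omega), ← List.getD_eq_getElem _ jk (by omega)]
    rw [hn] at hj
    have h2j : 2 * j + 1 < c.length := by omega
    have h2j1 : 2 * (j+1) + 1 < c.length := by omega
    rw [toP_getD c j h2j, toP_getD c (j+1) h2j1]
    have := hedge (2 * j + 1) (by omega)
    rw [cEdge] at this
    have hmod : (2 * j + 1 + 1) % c.length = 2 * (j + 1) := by
      rw [Nat.mod_eq_of_lt (by omega)]; ring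
    rw [hmod] at this
    exact ⟨this.1, fun hm => by have := this.2.mp hm; omega⟩
  · have hP : toP c ≠ [] := by
      intro h'
      have := toP_length c; rw [h'] at this; simp at this; omega
    rw [headI_eq_getD _ hP jk, getLastD_eq_getD _ hP jk, hn]
    have hc2 : 2 * (c.length / 2 - 1) + 1 < c.length := by omega
    have hc0 : 2 * 0 + 1 < c.length := by omega
    rw [toP_getD c _ hc2, toP_getD c 0 hc0]
    have := hedge (c.length - 1) (by omega)
    rw [cEdge] at this
    have hm1 : (c.length - 1 + 1) % c.length = 0 := by
      have : c.length - 1 + 1 = c.length := by omega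
      rw [this]; simp
    rw [hm1] at this
    have he1 : 2 * (c.length / 2 - 1) + 1 = c.length - 1 := by omega
    have he2 : (2 : ℕ) * 0 = 0 := by norm_num
    rw [he1, he2]
    exact ⟨this.1, fun hm => by have := this.2.mp hm; omega⟩

end CS
end SecB

section SecC
variable {V : Type*} [Inhabited V] [DecidableEq V]
set_option linter.unusedSectionVars false
namespace CS

/-- the `j`-th pair edge -/
def pE (P : List (V × V)) (j : ℕ) : Sym2 V := s((P.getD j jk).1, (P.getD j jk).2)

/-- the `j`-th connector edge -/
def cE (P : List (V × V)) (j : ℕ) : Sym2 V :=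
  s((P.getD j jk).2, (P.getD ((j + 1) % P.length) jk).1)

lemma mem_cEdges_toL (P : List (V × V)) (e : Sym2 V) :
    e ∈ cEdges (toL P) ↔
      (∃ j < P.length, e = pE P j) ∨ (∃ j < P.length, e = cE P j) := by
  unfold cEdges
  rw [List.mem_toFinset, List.mem_map]
  constructor
  · rintro ⟨i, hi, rfl⟩
    rw [List.mem_range, toL_length] at hi
    rcases Nat.even_or_odd i with ⟨j, hj⟩ | ⟨j, hj⟩
    · have hij : i = 2 * j := by omega
      subst hij
      exact Or.inl ⟨j, by omega, by rw [cEdge_toL_even P j (by omega)]; rfl⟩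
    · have hij : i = 2 * j + 1 := by omega
      subst hij
      exact Or.inr ⟨j, by omega, by rw [cEdge_toL_odd P j (by omega)]; rfl⟩
  · rintro (⟨j, hj, rfl⟩ | ⟨j, hj, rfl⟩)
    · exact ⟨2 * j, by rw [List.mem_range, toL_length]; omega, by rw [cEdge_toL_even P j hj]; rfl⟩
    · exact ⟨2 * j + 1, by rw [List.mem_range, toL_length]; omega, by rw [cEdge_toL_odd P j hj]; rfl⟩

lemma kept_edges (X A A' Y : List (V × V)) (hA : A ≠ []) (hA' : A' ≠ [])
    (h1 : A'.headI.1 = A.headI.1) (h2 : (A'.getLastD jk).2 = (A.getLastD jk).2) :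
    ∀ e ∈ cEdges (toL (X ++ A ++ Y)),
      e ∈ cEdges (toL (X ++ A' ++ Y)) ∨ (∃ j < A.length, e = pE A j) ∨
        (∃ j, j + 1 < A.length ∧ e = s((A.getD j jk).2, (A.getD (j+1) jk).1)) := by
  intro e he
  have hm : 0 < A.length := List.length_pos_iff.mpr hA
  have hm' : 0 < A'.length := List.length_pos_iff.mpr hA'
  set P := X ++ A ++ Y with hP
  set N := X ++ A' ++ Y with hN
  have hPlen : P.length = X.length + A.length + Y.length := by
    simp [hP]; omega
  have hNlen : N.length = X.length + A'.length + Y.length := by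
    simp [hN]; omega
  have hgX : ∀ i, i < X.length → P.getD i jk = X.getD i jk ∧ N.getD i jk = X.getD i jk := by
    intro i hi
    constructor
    · rw [hP, List.append_assoc]; exact List.getD_append _ _ _ _ hi
    · rw [hN, List.append_assoc]; exact List.getD_append _ _ _ _ hi
  have hgA : ∀ i, i < A.length → P.getD (X.length + i) jk = A.getD i jk := by
    intro i hi
    rw [hP, List.append_assoc, List.getD_append_right _ _ _ _ (by omega)]
    simp only [Nat.add_sub_cancel_left]
    exact List.getD_append _ _ _ _ hi
  have hgA' : ∀ i, i < A'.length → N.getD (X.length + i) jk = A'.getD i jk := by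
    intro i hi
    rw [hN, List.append_assoc, List.getD_append_right _ _ _ _ (by omega)]
    simp only [Nat.add_sub_cancel_left]
    exact List.getD_append _ _ _ _ hi
  have hgY : ∀ i, i < Y.length →
      P.getD (X.length + A.length + i) jk = Y.getD i jk ∧
      N.getD (X.length + A'.length + i) jk = Y.getD i jk := by
    intro i hi
    constructor
    · rw [hP, List.append_assoc, List.getD_append_right _ _ _ _ (by omega)]
      rw [List.getD_append_right _ _ _ _ (by omega)]
      congr 1; omega
    · rw [hN, List.append_assoc, List.getD_append_right _ _ _ _ (by omega)]
      rw [List.getD_append_right _ _ _ _ (by omega)]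
      congr 1; omega
  -- start vertices agree in first component
  have hstart : (N.getD 0 jk).1 = (P.getD 0 jk).1 := by
    rcases Nat.eq_zero_or_pos X.length with hX0 | hXpos
    · have hA0 : P.getD 0 jk = A.getD 0 jk := by
        have := hgA 0 hm; rw [hX0] at this; simpa using this
      have hA'0 : N.getD 0 jk = A'.getD 0 jk := by
        have := hgA' 0 hm'; rw [hX0] at this; simpa using this
      rw [hA0, hA'0, ← headI_eq_getD A hA jk, ← headI_eq_getD A' hA' jk]
      exact h1
    · rw [(hgX 0 hXpos).1, (hgX 0 hXpos).2]
  -- entry of arc agrees in first component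
  have hentry : (N.getD X.length jk).1 = (P.getD X.length jk).1 := by
    have e1 : P.getD X.length jk = A.getD 0 jk := by simpa using hgA 0 hm
    have e2 : N.getD X.length jk = A'.getD 0 jk := by simpa using hgA' 0 hm'
    rw [e1, e2, ← headI_eq_getD A hA jk, ← headI_eq_getD A' hA' jk]
    exact h1
  -- exit of arc agrees in second component
  have hexit : (N.getD (X.length + A'.length - 1) jk).2
      = (P.getD (X.length + A.length - 1) jk).2 := by
    have e1 : P.getD (X.length + A.length - 1) jk = A.getD (A.length - 1) jk := by
      have := hgA (A.length - 1) (by omega)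
      rw [show X.length + (A.length - 1) = X.length + A.length - 1 by omega] at this
      exact this
    have e2 : N.getD (X.length + A'.length - 1) jk = A'.getD (A'.length - 1) jk := by
      have := hgA' (A'.length - 1) (by omega)
      rw [show X.length + (A'.length - 1) = X.length + A'.length - 1 by omega] at this
      exact this
    rw [e1, e2, ← getLastD_eq_getD A hA jk, ← getLastD_eq_getD A' hA' jk]
    exact h2
  rw [mem_cEdges_toL] at he
  rcases he with ⟨j, hj, rfl⟩ | ⟨j, hj, rfl⟩
  · -- pair edge
    rw [hPlen] at hj
    rcases Nat.lt_or_ge j X.length with hc | hc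
    · left
      rw [mem_cEdges_toL]
      refine Or.inl ⟨j, by omega, ?_⟩
      unfold pE
      rw [(hgX j hc).1, (hgX j hc).2]
    · rcases Nat.lt_or_ge j (X.length + A.length) with hc2 | hc2
      · right; left
        obtain ⟨k, rfl⟩ : ∃ k, j = X.length + k := ⟨j - X.length, by omega⟩
        refine ⟨k, by omega, ?_⟩
        unfold pE
        rw [hgA k (by omega)]
      · left
        rw [mem_cEdges_toL]
        obtain ⟨k, rfl⟩ : ∃ k, j = X.length + A.length + k :=
          ⟨j - X.length - A.length, by omega⟩
        refine Or.inl ⟨X.length + A'.length + k, by rw [hNlen]; omega, ?_⟩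
        unfold pE
        rw [(hgY k (by omega)).1, (hgY k (by omega)).2]
  · -- connector edge
    rw [hPlen] at hj
    have hn1 : 0 < P.length := by omega
    have hn1' : 0 < N.length := by omega
    rcases Nat.lt_or_ge (j+1) X.length with hc | hc
    · -- inside X
      left; rw [mem_cEdges_toL]
      refine Or.inr ⟨j, by rw [hNlen]; omega, ?_⟩
      unfold cE
      have w1 : (j + 1) % P.length = j + 1 := Nat.mod_eq_of_lt (by omega)
      have w2 : (j + 1) % N.length = j + 1 := by
        rw [hNlen]; exact Nat.mod_eq_of_lt (by omega)
      rw [w1, w2]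
      rw [(hgX j (by omega)).1, (hgX j (by omega)).2,
        (hgX (j+1) hc).1, (hgX (j+1) hc).2]
    · rcases Nat.eq_or_lt_of_le hc with hc1 | hc1
      · -- j + 1 = X.length : junction X → A
        left; rw [mem_cEdges_toL]
        refine Or.inr ⟨j, by rw [hNlen]; omega, ?_⟩
        unfold cE
        have w1 : (j + 1) % P.length = j + 1 := Nat.mod_eq_of_lt (by omega)
        have w2 : (j + 1) % N.length = j + 1 := by
          rw [hNlen]; exact Nat.mod_eq_of_lt (by omega)
        rw [w1, w2, (hgX j (by omega)).1, (hgX j (by omega)).2,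
          show j + 1 = X.length from hc1.symm, hentry]
      · -- j ≥ X.length
        rcases Nat.lt_or_ge (j+1) (X.length + A.length) with hc2 | hc2
        · -- inner connector of A
          right; right
          obtain ⟨k, rfl⟩ : ∃ k, j = X.length + k := ⟨j - X.length, by omega⟩
          refine ⟨k, by omega, ?_⟩
          unfold cE
          have w1 : (X.length + k + 1) % P.length = X.length + k + 1 :=
            Nat.mod_eq_of_lt (by omega)
          rw [w1]
          have e2 : P.getD (X.length + k + 1) jk = A.getD (k + 1) jk := by
            rw [show X.length + k + 1 = X.length + (k + 1) by omega]
            exact hgA (k+1) (by omega)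
          rw [hgA k (by omega), e2]
        · rcases Nat.eq_or_lt_of_le hc2 with hc3 | hc3
          · -- j + 1 = X.length + A.length : junction A → Y (or wrap)
            left; rw [mem_cEdges_toL]
            refine Or.inr ⟨X.length + A'.length - 1, by rw [hNlen]; omega, ?_⟩
            unfold cE
            have ej : (N.getD (X.length + A'.length - 1) jk).2 = (P.getD j jk).2 := by
              rw [hexit]; congr 2; omega
            rw [ej]
            rcases Nat.eq_zero_or_pos Y.length with hY0 | hYpos
            · -- wrap around
              have w1 : (j + 1) % P.length = 0 := by
                rw [hPlen]; rw [show j + 1 = X.length + A.length + Y.length by omega]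
                simp
              have w2 : (X.length + A'.length - 1 + 1) % N.length = 0 := by
                rw [show X.length + A'.length - 1 + 1
                  = X.length + A'.length + Y.length by omega, hNlen]
                simp
              rw [w1, w2, hstart]
            · have w1 : (j + 1) % P.length = j + 1 := Nat.mod_eq_of_lt (by omega)
              have w2 : (X.length + A'.length - 1 + 1) % N.length
                  = X.length + A'.length := by
                rw [show X.length + A'.length - 1 + 1 = X.length + A'.length by omega,
                  hNlen]
                exact Nat.mod_eq_of_lt (by omega)
              rw [w1, w2]
              have e1 : P.getD (j+1) jk = Y.getD 0 jk := by
                rw [show j + 1 = X.length + A.length + 0 by omega]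
                exact (hgY 0 hYpos).1
              have e2 : N.getD (X.length + A'.length) jk = Y.getD 0 jk := by
                rw [show X.length + A'.length = X.length + A'.length + 0 by omega]
                exact (hgY 0 hYpos).2
              rw [e1, e2]
          · -- j ≥ X.length + A.length : inside Y
            left; rw [mem_cEdges_toL]
            obtain ⟨k, rfl⟩ : ∃ k, j = X.length + A.length + k :=
              ⟨j - X.length - A.length, by omega⟩
            refine Or.inr ⟨X.length + A'.length + k, by rw [hNlen]; omega, ?_⟩
            unfold cE
            rw [(hgY k (by omega)).1, (hgY k (by omega)).2]
            rcases Nat.lt_or_ge (k + 1) Y.length with hw | hw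
            · have w1 : (X.length + A.length + k + 1) % P.length
                  = X.length + A.length + (k + 1) := by
                rw [show X.length + A.length + k + 1
                  = X.length + A.length + (k + 1) by omega]
                exact Nat.mod_eq_of_lt (by omega)
              have w2 : (X.length + A'.length + k + 1) % N.length
                  = X.length + A'.length + (k + 1) := by
                rw [show X.length + A'.length + k + 1
                  = X.length + A'.length + (k + 1) by omega, hNlen]
                exact Nat.mod_eq_of_lt (by omega)
              rw [w1, w2, (hgY (k+1) hw).1, (hgY (k+1) hw).2]
            · have w1 : (X.length + A.length + k + 1) % P.length = 0 := by
                rw [show X.length + A.length + k + 1 = P.length by omega]; simp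
              have w2 : (X.length + A'.length + k + 1) % N.length = 0 := by
                rw [show X.length + A'.length + k + 1 = N.length by omega]; simp
              rw [w1, w2, hstart]

end CS
end SecC

section SecD
variable {V : Type*} [Inhabited V] [DecidableEq V] {G : SimpleGraph V} {M : Set (Sym2 V)}
set_option linter.unusedSectionVars false
namespace CS

/-- getD convenience lemmas for take/drop/reversed-swapped segments -/
lemma getD_take' (A : List (V × V)) (n i : ℕ) (h : i < n) (h2 : i < A.length) :
    (A.take n).getD i jk = A.getD i jk := by
  rw [List.getD_eq_getElem _ _ (by rw [List.length_take]; omega),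
    List.getD_eq_getElem _ _ h2, List.getElem_take]

lemma getD_drop' (A : List (V × V)) (n i : ℕ) (h : n + i < A.length) :
    (A.drop n).getD i jk = A.getD (n + i) jk := by
  rw [List.getD_eq_getElem _ _ (by rw [List.length_drop]; omega),
    List.getD_eq_getElem _ _ h, List.getElem_drop]

/-- components of a nodup pair-list are pairwise distinct -/
lemma nodup_fst {P : List (V × V)} (h : (toL P).Nodup) {i j : ℕ}
    (hi : i < P.length) (hj : j < P.length)
    (he : (P.getD i jk).1 = (P.getD j jk).1) : i = j := by
  have e1 : (toL P)[2 * i]'(by rw [toL_length]; omega) = (P.getD i jk).1 := by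
    rw [← List.getD_eq_getElem _ default (by rw [toL_length]; omega)]
    exact toL_getD_even P i hi default
  have e2 : (toL P)[2 * j]'(by rw [toL_length]; omega) = (P.getD j jk).1 := by
    rw [← List.getD_eq_getElem _ default (by rw [toL_length]; omega)]
    exact toL_getD_even P j hj default
  have := (h.getElem_inj_iff (hi := by rw [toL_length]; omega)
    (hj := by rw [toL_length]; omega)).mp (e1.trans (he.trans e2.symm))
  omega

lemma nodup_snd {P : List (V × V)} (h : (toL P).Nodup) {i j : ℕ}
    (hi : i < P.length) (hj : j < P.length)
    (he : (P.getD i jk).2 = (P.getD j jk).2) : i = j := by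
  have e1 : (toL P)[2 * i + 1]'(by rw [toL_length]; omega) = (P.getD i jk).2 := by
    rw [← List.getD_eq_getElem _ default (by rw [toL_length]; omega)]
    exact toL_getD_odd P i hi default
  have e2 : (toL P)[2 * j + 1]'(by rw [toL_length]; omega) = (P.getD j jk).2 := by
    rw [← List.getD_eq_getElem _ default (by rw [toL_length]; omega)]
    exact toL_getD_odd P j hj default
  have := (h.getElem_inj_iff (hi := by rw [toL_length]; omega)
    (hj := by rw [toL_length]; omega)).mp (e1.trans (he.trans e2.symm))
  omega

lemma nodup_cross {P : List (V × V)} (h : (toL P).Nodup) {i j : ℕ}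
    (hi : i < P.length) (hj : j < P.length) :
    (P.getD i jk).1 ≠ (P.getD j jk).2 := by
  intro he
  have e1 : (toL P)[2 * i]'(by rw [toL_length]; omega) = (P.getD i jk).1 := by
    rw [← List.getD_eq_getElem _ default (by rw [toL_length]; omega)]
    exact toL_getD_even P i hi default
  have e2 : (toL P)[2 * j + 1]'(by rw [toL_length]; omega) = (P.getD j jk).2 := by
    rw [← List.getD_eq_getElem _ default (by rw [toL_length]; omega)]
    exact toL_getD_odd P j hj default
  have := (h.getElem_inj_iff (hi := by rw [toL_length]; omega)
    (hj := by rw [toL_length]; omega)).mp (e1.trans (he.trans e2.symm))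
  omega

lemma getD_XAY (X A Y : List (V × V)) (i : ℕ) (hi : i < A.length) :
    (X ++ A ++ Y).getD (X.length + i) jk = A.getD i jk := by
  rw [List.append_assoc, List.getD_append_right _ _ _ _ (by omega)]
  simp only [Nat.add_sub_cancel_left]
  exact List.getD_append _ _ _ _ hi

/-- conn depends on second comp of first arg, first comp of second arg -/
lemma conn_fst {x y y' : V × V} (h : Conn G M x y) (e : y'.1 = y.1) :
    Conn G M x y' := by
  unfold Conn at h ⊢; rw [e]; exact h

lemma conn_snd {x x' y : V × V} (h : Conn G M x y) (e : x'.2 = x.2) :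
    Conn G M x' y := by
  unfold Conn at h ⊢; rw [e]; exact h

lemma conn_swap {x y : V × V} (h : Conn G M x y) :
    Conn G M (Prod.swap y) (Prod.swap x) := by
  unfold Conn at h ⊢
  simp only [Prod.snd_swap, Prod.fst_swap]
  rw [Sym2.eq_swap]; exact h

/-- every cyclic connector of a PC satisfies Conn -/
lemma PC.conn_all {P : List (V × V)} (h : PC G M P) (j : ℕ) (hj : j < P.length) :
    Conn G M (P.getD j jk) (P.getD ((j + 1) % P.length) jk) := by
  have hn : 0 < P.length := by have := h.len; omega
  rcases Nat.lt_or_ge (j+1) P.length with hlt | hge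
  · rw [Nat.mod_eq_of_lt hlt]; exact chain_getD h.chain j hlt
  · have hj1 : j + 1 = P.length := by omega
    have h2 : (j + 1) % P.length = 0 := by rw [hj1]; simp
    rw [h2]
    have hP : P ≠ [] := by intro h'; rw [h'] at hn; simp at hn
    rw [← headI_eq_getD P hP jk]
    have : P.getD j jk = P.getLastD jk := by
      rw [getLastD_eq_getD P hP jk]; congr 1; omega
    rw [this]; exact h.wrap

/-- pair edges belong to the cycle edge set -/
lemma pair_mem_cEdges {P : List (V × V)} {p : V × V} (hp : p ∈ P) :
    s(p.1, p.2) ∈ cEdges (toL P) := by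
  rw [List.mem_iff_getElem] at hp
  obtain ⟨j, hj, hpj⟩ := hp
  rw [mem_cEdges_toL]
  exact Or.inl ⟨j, hj, by unfold pE; rw [List.getD_eq_getElem _ _ hj, hpj]⟩

/-- M-edges of a PC whose pairs come from P (up to swap) are edges of P -/
lemma M_edges_sub {P N : List (V × V)} (hN : PC G M N)
    (hsub : ∀ p ∈ N, p ∈ P ∨ Prod.swap p ∈ P) :
    ∀ e ∈ cEdges (toL N), e ∈ M → e ∈ cEdges (toL P) := by
  intro e he hm
  rw [mem_cEdges_toL] at he
  rcases he with ⟨j, hj, rfl⟩ | ⟨j, hj, rfl⟩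
  · have hmem : N.getD j jk ∈ N := by
      rw [List.getD_eq_getElem _ _ hj]; exact List.getElem_mem _
    rcases hsub _ hmem with h | h
    · exact pair_mem_cEdges h
    · have h' := pair_mem_cEdges h
      unfold pE
      rw [Sym2.eq_swap]
      simpa [Prod.fst_swap, Prod.snd_swap] using h'
  · exact absurd hm (hN.conn_all j hj).2

/-- a chord between components of distinct pairs of a PC is not in M -/
lemma chord_not_M (hMu : ∀ v : V, ∃! e, e ∈ M ∧ v ∈ e) {P : List (V × V)}
    (hpc : PC G M P) {i j : ℕ} (hi : i < P.length) (hj : j < P.length)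
    (hij : i ≠ j) {u v : V}
    (hu : u = (P.getD i jk).1 ∨ u = (P.getD i jk).2)
    (hv : v = (P.getD j jk).1 ∨ v = (P.getD j jk).2) : s(u, v) ∉ M := by
  intro hm
  have hpi : P.getD i jk ∈ P := by
    rw [List.getD_eq_getElem _ _ hi]; exact List.getElem_mem _
  have hMi := (hpc.pmem _ hpi).2
  have humem : u ∈ s((P.getD i jk).1, (P.getD i jk).2) := by
    rcases hu with rfl | rfl
    · exact Sym2.mem_mk_left _ _
    · exact Sym2.mem_mk_right _ _
  have humem2 : u ∈ s(u, v) := Sym2.mem_mk_left _ _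
  obtain ⟨e₀, -, hun⟩ := hMu u
  have h1 := hun _ ⟨hm, humem2⟩
  have h2 := hun _ ⟨hMi, humem⟩
  have heq : s(u, v) = s((P.getD i jk).1, (P.getD i jk).2) := h1.trans h2.symm
  rw [Sym2.eq_iff] at heq
  have hnd := hpc.nodup
  rcases heq with ⟨h3, h4⟩ | ⟨h3, h4⟩
  · rcases hv with hv' | hv'
    · exact (nodup_cross hnd hj hi) (hv'.symm.trans h4)
    · exact hij (nodup_snd hnd hj hi (hv'.symm.trans h4)).symm
  · rcases hv with hv' | hv'
    · exact hij (nodup_fst hnd hj hi (hv'.symm.trans h4)).symm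
    · exact (nodup_cross hnd hi hj) (h4.symm.trans hv')

end CS
end SecD

section SecE
variable {V : Type*} [Inhabited V] [DecidableEq V] {G : SimpleGraph V} {M : Set (Sym2 V)}
set_option linter.unusedSectionVars false
namespace CS

lemma PC_replace (X A A' Y : List (V × V)) (hPC : PC G M (X ++ A ++ Y))
    (hA : A ≠ []) (hA' : A' ≠ []) (hXY : X ≠ [] ∨ Y ≠ [])
    (h1 : A'.headI.1 = A.headI.1) (h2 : (A'.getLastD jk).2 = (A.getLastD jk).2)
    (hnd : (toL (X ++ A' ++ Y)).Nodup)
    (hpm : ∀ p ∈ A', s(p.1, p.2) ∈ G.edgeSet ∧ s(p.1, p.2) ∈ M)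
    (hch : A'.Chain' (Conn G M)) : PC G M (X ++ A' ++ Y) := by
  have hXA' : X ++ A' ≠ [] := by
    intro h; rcases List.append_eq_nil_iff.mp h with ⟨-, h⟩; exact hA' h
  have hXA : X ++ A ≠ [] := by
    intro h; rcases List.append_eq_nil_iff.mp h with ⟨-, h⟩; exact hA h
  obtain ⟨hlen, hndP, hpmP, hchP, hwrP⟩ := hPC
  -- decompose the chain of P
  unfold List.Chain' at hchP; rw [List.isChain_append] at hchP
  obtain ⟨hchXA, hchY, hjXAY⟩ := hchP
  rw [List.isChain_append] at hchXA
  obtain ⟨hchX, hchA, hjXA⟩ := hchXA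
  constructor
  · -- length
    have l1 : 1 ≤ A'.length := List.length_pos_iff.mpr hA'
    rcases hXY with hX | hY
    · have : 1 ≤ X.length := List.length_pos_iff.mpr hX
      simp only [List.length_append]; omega
    · have : 1 ≤ Y.length := List.length_pos_iff.mpr hY
      simp only [List.length_append]; omega
  · exact hnd
  · intro p hp
    rcases List.mem_append.mp hp with hp' | hpY
    · rcases List.mem_append.mp hp' with hpX | hpA'
      · exact hpmP p (by simp [hpX])
      · exact hpm p hpA'
    · exact hpmP p (by simp [hpY])
  · -- chain
    unfold List.Chain'; rw [List.isChain_append]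
    refine ⟨?_, hchY, ?_⟩
    · rw [List.isChain_append]
      refine ⟨hchX, hch, ?_⟩
      intro x hx y hy
      have hyA : A.headI ∈ A.head? := by rw [head?_ne A hA]; rfl
      have := hjXA x hx A.headI hyA
      rw [head?_ne A' hA'] at hy
      cases hy
      exact conn_fst this h1
    · intro x hx y hy
      have hxA : A.getLastD jk ∈ (X ++ A).getLast? := by
        rw [List.getLast?_append, getLast?_ne A hA]; rfl
      have := hjXAY _ hxA y hy
      rw [List.getLast?_append, getLast?_ne A' hA'] at hx
      cases hx
      exact conn_snd this h2
  · -- wrap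
    rcases eq_or_ne Y [] with hY0 | hYne
    · subst hY0
      have hXne : X ≠ [] := by rcases hXY with h | h; exact h; exact absurd rfl h
      have e1 : (X ++ A' ++ ([] : List (V × V))).getLastD jk = A'.getLastD jk := by
        rw [List.append_nil, getLastD_append X A' hA']
      have e2 : (X ++ A' ++ ([] : List (V × V))).headI = X.headI := by
        rw [List.append_nil, headI_append X A' hXne]
      have e3 : (X ++ A ++ ([] : List (V × V))).getLastD jk = A.getLastD jk := by
        rw [List.append_nil, getLastD_append X A hA]
      have e4 : (X ++ A ++ ([] : List (V × V))).headI = X.headI := by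
        rw [List.append_nil, headI_append X A hXne]
      rw [e1, e2]
      rw [e3, e4] at hwrP
      exact conn_snd hwrP h2
    · have e1 : (X ++ A' ++ Y).getLastD jk = Y.getLastD jk := getLastD_append _ Y hYne jk
      have e2 : (X ++ A ++ Y).getLastD jk = Y.getLastD jk := getLastD_append _ Y hYne jk
      rw [e1]
      rw [e2] at hwrP
      rcases eq_or_ne X [] with hX0 | hXne
      · subst hX0
        simp only [List.nil_append] at hwrP ⊢
        rw [headI_append A' Y hA']
        rw [headI_append A Y hA] at hwrP
        exact conn_fst hwrP h1
      · have e3 : (X ++ A' ++ Y).headI = X.headI := by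
          rw [headI_append _ Y hXA', headI_append X A' hXne]
        have e4 : (X ++ A ++ Y).headI = X.headI := by
          rw [headI_append _ Y hXA, headI_append X A hXne]
        rw [e3]; rw [e4] at hwrP; exact hwrP

lemma chain'_take {A : List (V × V)} (h : A.Chain' (Conn G M)) (n : ℕ) :
    (A.take n).Chain' (Conn G M) := by
  unfold List.Chain' at h ⊢; rw [List.isChain_iff_getElem] at h ⊢
  intro i hi
  simp only [List.length_take] at hi
  have hi1 : i + 1 < A.length := by omega
  have hin : i + 1 < n := by omega
  simp only [List.get_eq_getElem, List.getElem_take]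
  exact h i (by omega)

lemma chain'_drop {A : List (V × V)} (h : A.Chain' (Conn G M)) (n : ℕ) :
    (A.drop n).Chain' (Conn G M) := by
  unfold List.Chain' at h ⊢; rw [List.isChain_iff_getElem] at h ⊢
  intro i hi
  simp only [List.length_drop] at hi
  simp only [List.get_eq_getElem, List.getElem_drop]
  have := h (n + i) (by omega)
  simp only [← Nat.add_assoc]
  exact this

/-- Surgery 1: skip part of the arc using a forward chord. -/
lemma surgeryS1 (hMu : ∀ v : V, ∃! e, e ∈ M ∧ v ∈ e)
    (X A Y : List (V × V)) (hPC : PC G M (X ++ A ++ Y)) (hXY : X ≠ [] ∨ Y ≠ [])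
    (s t : ℕ) (hst : s + 2 ≤ t) (ht : t < A.length)
    (hadj : G.Adj (A.getD s jk).2 (A.getD t jk).1) :
    ∃ A' : List (V × V), A' ≠ [] ∧ A'.length < A.length ∧
      A'.headI.1 = A.headI.1 ∧ (A'.getLastD jk).2 = (A.getLastD jk).2 ∧
      PC G M (X ++ A' ++ Y) ∧
      (∀ p ∈ A', p ∈ A ∨ Prod.swap p ∈ A) ∧
      (∀ v ∈ toL (X ++ A' ++ Y), v ∈ toL (X ++ A ++ Y)) := by
  have hA : A ≠ [] := by intro h; rw [h] at ht; simp at ht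
  set A' : List (V × V) := A.take (s+1) ++ A.drop t with hA'def
  have hlt : (A.take (s+1)).length = s + 1 := List.length_take_of_le (by omega)
  have hld : (A.drop t).length = A.length - t := List.length_drop
  have htne : A.take (s+1) ≠ [] := by
    intro h; have := congrArg List.length h; rw [hlt] at this; simp at this
  have hdne : A.drop t ≠ [] := by
    intro h; have := congrArg List.length h; rw [hld] at this; simp at this; omega
  have hA'ne : A' ≠ [] := by
    intro h; rcases List.append_eq_nil_iff.mp h with ⟨h1, -⟩; exact htne h1
  have hA'len : A'.length < A.length := by
    rw [hA'def, List.length_append, hlt, hld]; omega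
  have hhead : A'.headI.1 = A.headI.1 := by
    rw [hA'def, headI_append _ _ htne, headI_eq_getD _ htne jk, headI_eq_getD _ hA jk,
      getD_take' A (s+1) 0 (by omega) (by omega)]
  have hlast : (A'.getLastD jk).2 = (A.getLastD jk).2 := by
    rw [hA'def, getLastD_append _ _ hdne, getLastD_eq_getD _ hdne jk,
      getLastD_eq_getD _ hA jk, hld, getD_drop' A t _ (by omega)]
    congr 2
    omega
  have hsubA : A'.Sublist A := by
    have h1 : A.drop t = (A.drop (s+1)).drop (t - (s+1)) := by
      rw [List.drop_drop]; congr 1; omega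
    have h2 : (A.take (s+1) ++ A.drop t).Sublist (A.take (s+1) ++ A.drop (s+1)) := by
      rw [List.append_sublist_append_left]
      rw [h1]; exact List.drop_sublist _ _
    rw [List.take_append_drop] at h2
    exact h2
  have hsubFull : (X ++ A' ++ Y).Sublist (X ++ A ++ Y) :=
    (hsubA.append_left X).append_right Y
  have hnd : (toL (X ++ A' ++ Y)).Nodup := hPC.nodup.sublist (toL_sublist hsubFull)
  have hchA : A.Chain' (Conn G M) :=
    (List.isChain_append.mp (List.isChain_append.mp hPC.chain).1).2.1
  have hconn : Conn G M (A.getD s jk) (A.getD t jk) := by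
    constructor
    · exact (SimpleGraph.mem_edgeSet G).mpr hadj
    · exact chord_not_M hMu hPC (i := X.length + s) (j := X.length + t)
        (by simp only [List.length_append]; omega)
        (by simp only [List.length_append]; omega) (by omega)
        (Or.inr (by rw [getD_XAY X A Y s (by omega)]))
        (Or.inl (by rw [getD_XAY X A Y t ht]))
  have hch : A'.Chain' (Conn G M) := by
    rw [hA'def]; unfold List.Chain'; rw [List.isChain_append]
    refine ⟨chain'_take hchA _, chain'_drop hchA _, ?_⟩
    intro p hp q hq
    rw [getLast?_ne _ htne] at hp
    rw [head?_ne _ hdne] at hq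
    cases hp; cases hq
    have e1 : (A.take (s+1)).getLastD jk = A.getD s jk := by
      rw [getLastD_eq_getD _ htne jk, hlt]
      exact getD_take' A (s+1) s (by omega) (by omega)
    have e2 : (A.drop t).headI = A.getD t jk := by
      rw [headI_eq_getD _ hdne jk]
      have := getD_drop' A t 0 (by omega)
      simpa using this
    rw [e1, e2]
    exact hconn
  have hpm : ∀ p ∈ A', s(p.1, p.2) ∈ G.edgeSet ∧ s(p.1, p.2) ∈ M := by
    intro p hp
    exact hPC.pmem p (by
      have : p ∈ A := hsubA.mem hp
      simp [this])
  refine ⟨A', hA'ne, hA'len, hhead, hlast,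
    PC_replace X A A' Y hPC hA hA'ne hXY hhead hlast hnd hpm hch, ?_, ?_⟩
  · intro p hp
    exact Or.inl (hsubA.mem hp)
  · intro v hv
    exact (toL_sublist hsubFull).mem hv

/-- Surgery 2: skip parts of the arc using two same-parity chords, reversing a segment. -/
lemma surgeryS2 (hMu : ∀ v : V, ∃! e, e ∈ M ∧ v ∈ e)
    (X A Y : List (V × V)) (hPC : PC G M (X ++ A ++ Y)) (hXY : X ≠ [] ∨ Y ≠ [])
    (x q t r : ℕ) (hxq : x < q) (hqt : q ≤ t) (htr : t < r) (hr : r < A.length)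
    (hgap : x + 2 ≤ q ∨ t + 2 ≤ r)
    (hadj1 : G.Adj (A.getD x jk).2 (A.getD t jk).2)
    (hadj2 : G.Adj (A.getD q jk).1 (A.getD r jk).1) :
    ∃ A' : List (V × V), A' ≠ [] ∧ A'.length < A.length ∧
      A'.headI.1 = A.headI.1 ∧ (A'.getLastD jk).2 = (A.getLastD jk).2 ∧
      PC G M (X ++ A' ++ Y) ∧
      (∀ p ∈ A', p ∈ A ∨ Prod.swap p ∈ A) ∧
      (∀ v ∈ toL (X ++ A' ++ Y), v ∈ toL (X ++ A ++ Y)) := by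
  have hA : A ≠ [] := by intro h; rw [h] at hr; simp at hr
  set seg : List (V × V) := (A.drop q).take (t - q + 1) with hsegdef
  set B : List (V × V) := (seg.map Prod.swap).reverse with hBdef
  set A' : List (V × V) := A.take (x+1) ++ B ++ A.drop r with hA'def
  have hseglen : seg.length = t - q + 1 := by
    rw [hsegdef, List.length_take_of_le (by rw [List.length_drop]; omega)]
  have hsegD : ∀ i, i ≤ t - q → seg.getD i jk = A.getD (q + i) jk := by
    intro i hi
    rw [hsegdef, getD_take' _ _ _ (by omega) (by rw [List.length_drop]; omega),
      getD_drop' A q i (by omega)]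
  have hBlen : B.length = t - q + 1 := by
    rw [hBdef, List.length_reverse, List.length_map, hseglen]
  have hBD : ∀ i, i ≤ t - q → B.getD i jk = Prod.swap (A.getD (t - i) jk) := by
    intro i hi
    rw [hBdef]
    rw [List.getD_eq_getElem _ _ (by rw [List.length_reverse, List.length_map, hseglen]; omega)]
    rw [List.getElem_reverse]
    rw [List.getElem_map]
    rw [← List.getD_eq_getElem seg jk (by rw [List.length_map, hseglen]; omega)]
    rw [hsegD _ (by rw [List.length_map, hseglen]; omega)]
    have hidx : q + ((seg.map Prod.swap).length - 1 - i) = t - i := by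
      rw [List.length_map, hseglen]; omega
    rw [hidx]
  have hBne : B ≠ [] := by
    intro h; have := congrArg List.length h; rw [hBlen] at this; simp at this
  have htne : A.take (x+1) ≠ [] := by
    intro h; have := congrArg List.length h
    rw [List.length_take_of_le (by omega)] at this; simp at this
  have hdne : A.drop r ≠ [] := by
    intro h; have := congrArg List.length h
    rw [List.length_drop] at this; simp at this; omega
  have hBAne : A.take (x+1) ++ B ≠ [] := by
    intro h; rcases List.append_eq_nil_iff.mp h with ⟨h1, -⟩; exact htne h1
  have hA'ne : A' ≠ [] := by
    intro h; rcases List.append_eq_nil_iff.mp h with ⟨h1, -⟩; exact hBAne h1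
  have hA'len : A'.length < A.length := by
    rw [hA'def, List.length_append, List.length_append,
      List.length_take_of_le (by omega), hBlen, List.length_drop]
    omega
  have hhead : A'.headI.1 = A.headI.1 := by
    rw [hA'def, List.append_assoc, headI_append _ _ htne, headI_eq_getD _ htne jk,
      headI_eq_getD _ hA jk, getD_take' A (x+1) 0 (by omega) (by omega)]
  have hlast : (A'.getLastD jk).2 = (A.getLastD jk).2 := by
    rw [hA'def, getLastD_append _ _ hdne, getLastD_eq_getD _ hdne jk,
      getLastD_eq_getD _ hA jk, List.length_drop, getD_drop' A r _ (by omega)]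
    congr 2
    omega
  have hBhead : B.headI = Prod.swap (A.getD t jk) := by
    rw [headI_eq_getD _ hBne jk, hBD 0 (by omega), Nat.sub_zero]
  have hBlast : B.getLastD jk = Prod.swap (A.getD q jk) := by
    rw [getLastD_eq_getD _ hBne jk, hBlen, hBD (t - q + 1 - 1) (by omega)]
    congr 2
    omega
  -- sublist for the unreversed version
  set Z : List (V × V) := A.take (x+1) ++ seg ++ A.drop r with hZdef
  have hZsub : Z.Sublist A := by
    have h1 : seg ++ A.drop (t+1) = A.drop q := by
      have := List.take_append_drop (t - q + 1) (A.drop q)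
      rw [List.drop_drop] at this
      rw [hsegdef]
      rw [show q + (t - q + 1) = t + 1 by omega] at this
      exact this
    have h2 : (A.drop r).Sublist (A.drop (t+1)) := by
      rw [show r = (t+1) + (r - (t+1)) by omega, ← List.drop_drop]
      exact List.drop_sublist _ _
    have h3 : (seg ++ A.drop r).Sublist (A.drop q) := by
      rw [← h1]
      rw [List.append_sublist_append_left]
      exact h2
    have h4 : (A.drop q).Sublist (A.drop (x+1)) := by
      rw [show q = (x+1) + (q - (x+1)) by omega, ← List.drop_drop]
      exact List.drop_sublist _ _
    have h5 : (seg ++ A.drop r).Sublist (A.drop (x+1)) := h3.trans h4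
    have h6 : (A.take (x+1) ++ (seg ++ A.drop r)).Sublist (A.take (x+1) ++ A.drop (x+1)) := by
      rw [List.append_sublist_append_left]
      exact h5
    rw [List.take_append_drop] at h6
    rw [hZdef, List.append_assoc]
    exact h6
  have hpermB : (toL B).Perm (toL seg) := by
    rw [hBdef, toL_reverse_swap]
    exact List.reverse_perm _
  have hperm : (toL (X ++ A' ++ Y)).Perm (toL (X ++ Z ++ Y)) := by
    simp only [hA'def, hZdef, toL_append]
    exact ((((hpermB.append_left _).append_right _).append_left _).append_right _)
  have hndZ : (toL (X ++ Z ++ Y)).Nodup :=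
    hPC.nodup.sublist (toL_sublist ((hZsub.append_left X).append_right Y))
  have hnd : (toL (X ++ A' ++ Y)).Nodup := hperm.nodup_iff.mpr hndZ
  have hchA : A.Chain' (Conn G M) :=
    (List.isChain_append.mp (List.isChain_append.mp hPC.chain).1).2.1
  have hsegsubA : ∀ p ∈ seg, p ∈ A := by
    intro p hp
    exact (List.drop_sublist q A).mem ((List.take_sublist _ _).mem hp)
  have hBpairs : ∀ p ∈ B, Prod.swap p ∈ A := by
    intro p hp
    rw [hBdef, List.mem_reverse, List.mem_map] at hp
    obtain ⟨σ, hσ, rfl⟩ := hp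
    rw [Prod.swap_swap]
    exact hsegsubA σ hσ
  have hXlen : ∀ i, i < A.length → X.length + i < (X ++ A ++ Y).length := by
    intro i hi; simp only [List.length_append]; omega
  -- the two chords are not in M
  have hchord1 : s((A.getD x jk).2, (A.getD t jk).2) ∉ M :=
    chord_not_M hMu hPC (hXlen x (by omega)) (hXlen t (by omega)) (by omega)
      (Or.inr (by rw [getD_XAY X A Y x (by omega)]))
      (Or.inr (by rw [getD_XAY X A Y t (by omega)]))
  have hchord2 : s((A.getD q jk).1, (A.getD r jk).1) ∉ M :=
    chord_not_M hMu hPC (hXlen q (by omega)) (hXlen r hr) (by omega)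
      (Or.inl (by rw [getD_XAY X A Y q (by omega)]))
      (Or.inl (by rw [getD_XAY X A Y r hr]))
  have hchB : B.Chain' (Conn G M) := by
    unfold List.Chain'; rw [List.isChain_iff_getElem]
    intro i hi
    rw [hBlen] at hi
    rw [← List.getD_eq_getElem _ jk (by rw [hBlen]; omega),
      ← List.getD_eq_getElem _ jk (by rw [hBlen]; omega)]
    rw [hBD i (by omega), hBD (i+1) (by omega)]
    have hc : Conn G M (A.getD (t - i - 1) jk) (A.getD (t - i) jk) := by
      have := chain_getD hchA (t - i - 1) (by omega)
      rw [show t - i - 1 + 1 = t - i by omega] at this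
      exact this
    have := conn_swap hc
    rw [show t - (i+1) = t - i - 1 by omega]
    exact this
  have hch : A'.Chain' (Conn G M) := by
    rw [hA'def]; unfold List.Chain'; rw [List.isChain_append]
    refine ⟨?_, chain'_drop hchA _, ?_⟩
    · rw [List.isChain_append]
      refine ⟨chain'_take hchA _, hchB, ?_⟩
      intro p hp qq hqq
      rw [getLast?_ne _ htne] at hp
      rw [head?_ne _ hBne] at hqq
      cases hp; cases hqq
      have e1 : (A.take (x+1)).getLastD jk = A.getD x jk := by
        rw [getLastD_eq_getD _ htne jk, List.length_take_of_le (by omega)]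
        exact getD_take' A (x+1) x (by omega) (by omega)
      rw [e1, hBhead]
      constructor
      · simp only [Prod.fst_swap]
        exact (SimpleGraph.mem_edgeSet G).mpr hadj1
      · simp only [Prod.fst_swap]
        exact hchord1
    · intro p hp qq hqq
      rw [List.getLast?_append, getLast?_ne _ hBne] at hp
      rw [head?_ne _ hdne] at hqq
      cases hp; cases hqq
      have e2 : (A.drop r).headI = A.getD r jk := by
        rw [headI_eq_getD _ hdne jk]
        have := getD_drop' A r 0 (by omega)
        simpa using this
      rw [hBlast, e2]
      constructor
      · simp only [Prod.snd_swap]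
        exact (SimpleGraph.mem_edgeSet G).mpr hadj2
      · simp only [Prod.snd_swap]
        exact hchord2
  have hpm : ∀ p ∈ A', s(p.1, p.2) ∈ G.edgeSet ∧ s(p.1, p.2) ∈ M := by
    intro p hp
    rcases List.mem_append.mp hp with hp' | hpd
    · rcases List.mem_append.mp hp' with hpt | hpB
      · exact hPC.pmem p (by
          have : p ∈ A := (List.take_sublist _ _).mem hpt
          simp [this])
      · have hswap : Prod.swap p ∈ A := hBpairs p hpB
        have := hPC.pmem (Prod.swap p) (by simp [hswap])
        simp only [Prod.fst_swap, Prod.snd_swap] at this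
        rw [Sym2.eq_swap] at this
        exact this
    · exact hPC.pmem p (by
        have : p ∈ A := (List.drop_sublist _ _).mem hpd
        simp [this])
  refine ⟨A', hA'ne, hA'len, hhead, hlast,
    PC_replace X A A' Y hPC hA hA'ne hXY hhead hlast hnd hpm hch, ?_, ?_⟩
  · intro p hp
    rcases List.mem_append.mp hp with hp' | hpd
    · rcases List.mem_append.mp hp' with hpt | hpB
      · exact Or.inl ((List.take_sublist _ _).mem hpt)
      · exact Or.inr (hBpairs p hpB)
    · exact Or.inl ((List.drop_sublist _ _).mem hpd)
  · intro v hv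
    exact (toL_sublist ((hZsub.append_left X).append_right Y)).mem (hperm.mem_iff.mp hv)

end CS
end SecE

section SecF
variable {V : Type*} [Inhabited V] [DecidableEq V]
set_option linter.unusedSectionVars false
namespace CS

/-- threshold function -/
def hF (p : ℕ) : ℕ := 7 * 2 ^ (p - 1) - 4

lemma hF_one : hF 1 = 3 := by norm_num [hF]

lemma hF_ge (p : ℕ) (hp : 1 ≤ p) : 3 ≤ hF p := by
  unfold hF
  have : (2:ℕ)^0 ≤ 2^(p-1) := Nat.pow_le_pow_right (by norm_num) (by omega)
  simp at this
  omega

lemma hF_rec (p : ℕ) (hp : 1 ≤ p) : hF (p + 1) = 2 * hF p + 4 := by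
  unfold hF
  have e : p + 1 - 1 = (p - 1) + 1 := by omega
  rw [e, pow_succ]
  have : (2:ℕ)^0 ≤ 2^(p-1) := Nat.pow_le_pow_right (by norm_num) (by omega)
  simp at this
  omega

lemma indepClaim (G : SimpleGraph V) (a b : ℕ → V) (m : ℕ)
    (hS1 : ∀ s t, s + 2 ≤ t → t < m → ¬ G.Adj (a s) (b t))
    (hS2 : ∀ x q t r, x < q → q ≤ t → t < r → r < m → (x + 2 ≤ q ∨ t + 2 ≤ r) →
      ¬ (G.Adj (a x) (a t) ∧ G.Adj (b q) (b r)))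
    (hai : ∀ i j, i < m → j < m → a i = a j → i = j)
    (hbi : ∀ i j, i < m → j < m → b i = b j → i = j)
    (hab : ∀ i j, i < m → j < m → a i ≠ b j) :
    ∀ p, 1 ≤ p → ∀ x y, y < m → x + hF p ≤ y + 1 →
      ∃ S : Finset V, S.card = p + 1 ∧
        (∀ v ∈ S, ∃ i, x ≤ i ∧ i ≤ y ∧ (v = a i ∨ v = b i)) ∧
        (∀ u ∈ S, ∀ v ∈ S, u ≠ v → ¬ G.Adj u v) := by
  classical
  intro p hp
  induction p, hp using Nat.le_induction with
  | base =>
    intro x y hy hxy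
    rw [hF_one] at hxy
    have hx2 : x + 2 ≤ y := by omega
    have hxm : x < m := by omega
    have hx2m : x + 2 < m := by omega
    refine ⟨{a x, b (x+2)}, ?_, ?_, ?_⟩
    · rw [Finset.card_insert_of_notMem (by
        simp only [Finset.mem_singleton]
        exact hab x (x+2) hxm hx2m), Finset.card_singleton]
    · intro v hv
      rcases Finset.mem_insert.mp hv with rfl | hv'
      · exact ⟨x, le_rfl, by omega, Or.inl rfl⟩
      · rw [Finset.mem_singleton] at hv'
        exact ⟨x + 2, by omega, by omega, Or.inr hv'⟩
    · intro u hu v hv huv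
      rcases Finset.mem_insert.mp hu with rfl | hu' <;>
        rcases Finset.mem_insert.mp hv with rfl | hv'
      · exact absurd rfl huv
      · rw [Finset.mem_singleton] at hv'
        subst hv'
        exact hS1 x (x+2) (by omega) hx2m
      · rw [Finset.mem_singleton] at hu'
        subst hu'
        intro hadj
        exact hS1 x (x+2) (by omega) hx2m hadj.symm
      · rw [Finset.mem_singleton] at hu' hv'
        subst hu'; subst hv'
        exact absurd rfl huv
  | succ p hp ih =>
    intro x y hy hxy
    rw [hF_rec p hp] at hxy
    have hp3 : 3 ≤ hF p := hF_ge p hp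
    set Q : Finset ℕ := (Finset.Icc (x+2) (y-2)).filter (fun q => G.Adj (b q) (b y))
      with hQdef
    by_cases hQne : Q.Nonempty
    case pos =>
      set θ := Q.min' hQne with hθdef
      have hθQ : θ ∈ Q := Q.min'_mem hQne
      have hθIcc : x + 2 ≤ θ ∧ θ ≤ y - 2 := by
        have := (Finset.mem_filter.mp hθQ).1
        rw [Finset.mem_Icc] at this
        exact this
      have hθadj : G.Adj (b θ) (b y) := (Finset.mem_filter.mp hθQ).2
      have hθmin : ∀ q ∈ Q, θ ≤ q := fun q hq => Q.min'_le q hq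
      rcases le_or_gt (θ + hF p) (y - 1) with hcase | hcase
      · -- recurse on [θ, y-2], add a x
        obtain ⟨S₀, hS₀card, hS₀mem, hS₀adj⟩ := ih θ (y - 2) (by omega) (by omega)
        have hax : a x ∉ S₀ := by
          intro hmem
          obtain ⟨i, hi1, hi2, hvi⟩ := hS₀mem _ hmem
          rcases hvi with hv | hv
          · have := hai x i (by omega) (by omega) hv
            omega
          · exact hab x i (by omega) (by omega) hv
        refine ⟨insert (a x) S₀, ?_, ?_, ?_⟩
        · rw [Finset.card_insert_of_notMem hax, hS₀card]
        · intro v hv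
          rcases Finset.mem_insert.mp hv with rfl | hv'
          · exact ⟨x, le_rfl, by omega, Or.inl rfl⟩
          · obtain ⟨i, hi1, hi2, hvi⟩ := hS₀mem _ hv'
            exact ⟨i, by omega, by omega, hvi⟩
        · -- non-adjacency
          have key : ∀ v ∈ S₀, ¬ G.Adj (a x) v := by
            intro v hv'
            obtain ⟨i, hi1, hi2, hvi⟩ := hS₀mem _ hv'
            rcases hvi with rfl | rfl
            · intro hadj
              exact hS2 x θ i y (by omega) (by omega) (by omega) (by omega)
                (Or.inl (by omega)) ⟨hadj, hθadj⟩
            · exact hS1 x i (by omega) (by omega)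
          intro u hu v hv huv
          rcases Finset.mem_insert.mp hu with rfl | hu' <;>
            rcases Finset.mem_insert.mp hv with rfl | hv'
          · exact absurd rfl huv
          · exact key v hv'
          · intro hadj; exact key u hu' hadj.symm
          · exact hS₀adj u hu' v hv' huv
      · -- recurse on [x+2, θ-1], add b y
        obtain ⟨S₀, hS₀card, hS₀mem, hS₀adj⟩ := ih (x+2) (θ-1) (by omega) (by omega)
        have hby : b y ∉ S₀ := by
          intro hmem
          obtain ⟨i, hi1, hi2, hvi⟩ := hS₀mem _ hmem
          rcases hvi with hv | hv
          · exact hab i y (by omega) (by omega) hv.symm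
          · have := hbi y i (by omega) (by omega) hv
            omega
        refine ⟨insert (b y) S₀, ?_, ?_, ?_⟩
        · rw [Finset.card_insert_of_notMem hby, hS₀card]
        · intro v hv
          rcases Finset.mem_insert.mp hv with rfl | hv'
          · exact ⟨y, by omega, le_rfl, Or.inr rfl⟩
          · obtain ⟨i, hi1, hi2, hvi⟩ := hS₀mem _ hv'
            exact ⟨i, by omega, by omega, hvi⟩
        · have key : ∀ v ∈ S₀, ¬ G.Adj (b y) v := by
            intro v hv'
            obtain ⟨i, hi1, hi2, hvi⟩ := hS₀mem _ hv'
            rcases hvi with rfl | rfl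
            · intro hadj
              exact hS1 i y (by omega) (by omega) hadj.symm
            · intro hadj
              have hiQ : i ∈ Q := by
                rw [hQdef, Finset.mem_filter, Finset.mem_Icc]
                exact ⟨⟨by omega, by omega⟩, hadj.symm⟩
              have := hθmin i hiQ
              omega
          intro u hu v hv huv
          rcases Finset.mem_insert.mp hu with rfl | hu' <;>
            rcases Finset.mem_insert.mp hv with rfl | hv'
          · exact absurd rfl huv
          · exact key v hv'
          · intro hadj; exact key u hu' hadj.symm
          · exact hS₀adj u hu' v hv' huv
    case neg =>
      -- Q empty : θ = y - 1, recurse on [x+2, y-2], add b y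
      obtain ⟨S₀, hS₀card, hS₀mem, hS₀adj⟩ := ih (x+2) (y-2) (by omega) (by omega)
      have hby : b y ∉ S₀ := by
        intro hmem
        obtain ⟨i, hi1, hi2, hvi⟩ := hS₀mem _ hmem
        rcases hvi with hv | hv
        · exact hab i y (by omega) (by omega) hv.symm
        · have := hbi y i (by omega) (by omega) hv
          omega
      refine ⟨insert (b y) S₀, ?_, ?_, ?_⟩
      · rw [Finset.card_insert_of_notMem hby, hS₀card]
      · intro v hv
        rcases Finset.mem_insert.mp hv with rfl | hv'
        · exact ⟨y, by omega, le_rfl, Or.inr rfl⟩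
        · obtain ⟨i, hi1, hi2, hvi⟩ := hS₀mem _ hv'
          exact ⟨i, by omega, by omega, hvi⟩
      · have key : ∀ v ∈ S₀, ¬ G.Adj (b y) v := by
          intro v hv'
          obtain ⟨i, hi1, hi2, hvi⟩ := hS₀mem _ hv'
          rcases hvi with rfl | rfl
          · intro hadj
            exact hS1 i y (by omega) (by omega) hadj.symm
          · intro hadj
            have hiQ : i ∈ Q := by
              rw [hQdef, Finset.mem_filter, Finset.mem_Icc]
              exact ⟨⟨by omega, by omega⟩, hadj.symm⟩
            exact hQne ⟨i, hiQ⟩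
        intro u hu v hv huv
        rcases Finset.mem_insert.mp hu with rfl | hu' <;>
          rcases Finset.mem_insert.mp hv with rfl | hv'
        · exact absurd rfl huv
        · exact key v hv'
        · intro hadj; exact key u hu' hadj.symm
        · exact hS₀adj u hu' v hv' huv

end CS
end SecF

section SecG1
variable {V : Type*} [Inhabited V] [DecidableEq V] {G : SimpleGraph V} {M : Set (Sym2 V)}
set_option linter.unusedSectionVars false
namespace CS

/-- slot edges -/
def sE (P : List (V × V)) (z : ℕ) : Sym2 V :=
  if z % 2 = 0 then pE P (z / 2) else cE P (z / 2)

lemma sE_mem (P : List (V × V)) (z : ℕ) (hz : z < 2 * P.length) :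
    sE P z ∈ cEdges (toL P) := by
  rw [mem_cEdges_toL]
  unfold sE
  by_cases h : z % 2 = 0
  · rw [if_pos h]; exact Or.inl ⟨z / 2, by omega, rfl⟩
  · rw [if_neg h]; exact Or.inr ⟨z / 2, by omega, rfl⟩

lemma pE_inj {P : List (V × V)} (hnd : (toL P).Nodup) {j j' : ℕ}
    (hj : j < P.length) (hj' : j' < P.length) (he : pE P j = pE P j') : j = j' := by
  unfold pE at he
  rw [Sym2.eq_iff] at he
  rcases he with ⟨h1, -⟩ | ⟨h1, -⟩
  · exact nodup_fst hnd hj hj' h1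
  · exact absurd h1 (nodup_cross hnd hj hj')

lemma pE_ne_cE {P : List (V × V)} (hpc : PC G M P) {j j' : ℕ}
    (hj : j < P.length) (hj' : j' < P.length) : pE P j ≠ cE P j' := by
  have hnd := hpc.nodup
  have hn : 2 ≤ P.length := hpc.len
  intro he
  unfold pE cE at he
  have hσ : (j' + 1) % P.length < P.length := Nat.mod_lt _ (by omega)
  rw [Sym2.eq_iff] at he
  rcases he with ⟨h1, h2⟩ | ⟨h1, h2⟩
  · exact (nodup_cross hnd hj hj') h1
  · have e1 : j = (j' + 1) % P.length := nodup_fst hnd hj hσ h1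
    have e2 : j = j' := nodup_snd hnd hj hj' h2
    rcases Nat.lt_or_ge (j' + 1) P.length with hlt | hge
    · rw [Nat.mod_eq_of_lt hlt] at e1; omega
    · have : (j' + 1) % P.length = 0 := by
        rw [show j' + 1 = P.length by omega]; simp
      rw [this] at e1; omega

lemma cE_inj {P : List (V × V)} (hnd : (toL P).Nodup) {j j' : ℕ}
    (hj : j < P.length) (hj' : j' < P.length) (he : cE P j = cE P j') : j = j' := by
  unfold cE at he
  have hσ' : (j' + 1) % P.length < P.length := Nat.mod_lt _ (by omega)
  rw [Sym2.eq_iff] at he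
  rcases he with ⟨h1, -⟩ | ⟨h1, -⟩
  · exact nodup_snd hnd hj hj' h1
  · exact absurd h1.symm (nodup_cross hnd hσ' hj)

lemma sE_inj {P : List (V × V)} (hpc : PC G M P) {z w : ℕ}
    (hz : z < 2 * P.length) (hw : w < 2 * P.length) (he : sE P z = sE P w) :
    z = w := by
  unfold sE at he
  by_cases h1 : z % 2 = 0 <;> by_cases h2 : w % 2 = 0
  · rw [if_pos h1, if_pos h2] at he
    have := pE_inj hpc.nodup (by omega) (by omega) he
    omega
  · rw [if_pos h1, if_neg h2] at he
    exact absurd he (pE_ne_cE hpc (by omega) (by omega))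
  · rw [if_neg h1, if_pos h2] at he
    exact absurd he.symm (pE_ne_cE hpc (by omega) (by omega))
  · rw [if_neg h1, if_neg h2] at he
    have := cE_inj hpc.nodup (by omega) (by omega) he
    omega

/-- every edge of a cycle list has both endpoints in the list -/
lemma cEdges_vertex {c : List V} (hc : c ≠ []) {e : Sym2 V} (he : e ∈ cEdges c) :
    ∃ u v, e = s(u, v) ∧ u ∈ c ∧ v ∈ c := by
  unfold cEdges at he
  rw [List.mem_toFinset, List.mem_map] at he
  obtain ⟨i, hi, rfl⟩ := he
  rw [List.mem_range] at hi
  have h0 : 0 < c.length := List.length_pos_iff.mpr hc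
  refine ⟨_, _, rfl, ?_, ?_⟩
  · rw [List.getD_eq_getElem _ _ hi]; exact List.getElem_mem _
  · rw [List.getD_eq_getElem _ _ (Nat.mod_lt _ h0)]; exact List.getElem_mem _

/-- disjoint cycles have disjoint edge sets -/
lemma cEdges_disj {c d : List V} (hc : c ≠ []) (hdisj : ∀ v, v ∈ c → v ∉ d) :
    Disjoint (cEdges c) (cEdges d) := by
  rw [Finset.disjoint_left]
  intro e hec hed
  obtain ⟨u, v, rfl, hu, -⟩ := cEdges_vertex hc hec
  have hd : d ≠ [] := by
    intro h; rw [h] at hed; simp [cEdges] at hed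
  obtain ⟨u', v', he', hu', hv'⟩ := cEdges_vertex hd hed
  rw [Sym2.eq_iff] at he'
  rcases he' with ⟨h1, h2⟩ | ⟨h1, h2⟩
  · exact hdisj u hu (h1 ▸ hu')
  · exact hdisj u hu (h1 ▸ hv')

lemma arith_bound : ∀ α, 1 ≤ α → 4 * hF α + 4 ≤ 4 ^ (α + 1) := by
  intro α hα
  induction α, hα using Nat.le_induction with
  | base => norm_num [hF]
  | succ p hp ih =>
    rw [hF_rec p hp]
    have h4 : (4:ℕ) ^ (p + 1 + 1) = 4 * 4 ^ (p + 1) := by ring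
    have h16 : 16 ≤ 4 ^ (p + 1) := by
      calc (16:ℕ) = 4 ^ 2 := by norm_num
      _ ≤ 4 ^ (p + 1) := Nat.pow_le_pow_right (by norm_num) (by omega)
    omega

end CS
end SecG1

section SecG2
variable {V : Type*} [Inhabited V] [DecidableEq V]
set_option linter.unusedSectionVars false
namespace CS

/-- admissible replacement families -/
def Adm (G : SimpleGraph V) (M : Set (Sym2 V)) (c : List V) (F : Finset (Sym2 V))
    (𝒟 : Finset (List V)) : Prop :=
  (∀ D ∈ 𝒟, AltCycle G M D) ∧ (∀ D ∈ 𝒟, ∀ v ∈ D, v ∈ c) ∧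
  ((𝒟 : Set (List V)).Pairwise fun c' d => ∀ v, v ∈ c' → v ∉ d) ∧
  F ⊆ Ecyc 𝒟 ∧ (∀ D ∈ 𝒟, ∀ e ∈ cEdges D, e ∈ M → e ∈ cEdges c)

variable {G : SimpleGraph V} {M : Set (Sym2 V)} {c : List V} {F : Finset (Sym2 V)}

lemma Adm_replace {𝒟 : Finset (List V)} (hAdm : Adm G M c F 𝒟) {D N : List V}
    (hD : D ∈ 𝒟) (hN : AltCycle G M N) (hvert : ∀ v ∈ N, v ∈ D)
    (hMe : ∀ e ∈ cEdges N, e ∈ M → e ∈ cEdges D)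
    (hkept : ∀ e ∈ F, e ∈ cEdges D → e ∈ cEdges N) (hlen : N.length < D.length) :
    ∃ 𝒟', Adm G M c F 𝒟' ∧ ∑ E ∈ 𝒟', E.length < ∑ E ∈ 𝒟, E.length := by
  classical
  obtain ⟨hA1, hA2, hA3, hA4, hA5⟩ := hAdm
  refine ⟨insert N (𝒟.erase D), ⟨?_, ?_, ?_, ?_, ?_⟩, ?_⟩
  · intro E hE
    rcases Finset.mem_insert.mp hE with rfl | hE'
    · exact hN
    · exact hA1 E (Finset.mem_of_mem_erase hE')
  · intro E hE v hv
    rcases Finset.mem_insert.mp hE with rfl | hE'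
    · exact hA2 D hD v (hvert v hv)
    · exact hA2 E (Finset.mem_of_mem_erase hE') v hv
  · intro E hE E' hE' hne
    simp only [Finset.coe_insert, Set.mem_insert_iff, Finset.mem_coe] at hE hE'
    intro v hvE hvE'
    rcases hE with rfl | hE <;> rcases hE' with rfl | hE'
    · exact hne rfl
    · have hED : E' ≠ D := Finset.ne_of_mem_erase hE'
      exact hA3 hD (Finset.mem_of_mem_erase hE') (Ne.symm hED) v (hvert v hvE) hvE'
    · have hED : E ≠ D := Finset.ne_of_mem_erase hE
      exact hA3 (Finset.mem_of_mem_erase hE) hD hED v hvE (hvert v hvE')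
    · exact hA3 (Finset.mem_of_mem_erase hE) (Finset.mem_of_mem_erase hE')
        hne v hvE hvE'
  · intro f hf
    have := hA4 hf
    rw [Ecyc, Finset.mem_biUnion] at this
    obtain ⟨E, hE, hfe⟩ := this
    rw [Ecyc, Finset.mem_biUnion]
    by_cases hED : E = D
    · subst hED
      exact ⟨N, Finset.mem_insert_self _ _, hkept f hf hfe⟩
    · exact ⟨E, Finset.mem_insert_of_mem (Finset.mem_erase.mpr ⟨hED, hE⟩), hfe⟩
  · intro E hE e he hm
    rcases Finset.mem_insert.mp hE with rfl | hE'
    · exact hA5 D hD e (hMe e he hm) hm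
    · exact hA5 E (Finset.mem_of_mem_erase hE') e he hm
  · have hsum : ∑ E ∈ 𝒟.erase D, E.length + D.length = ∑ E ∈ 𝒟, E.length :=
      Finset.sum_erase_add 𝒟 _ hD
    have hle : ∑ E ∈ insert N (𝒟.erase D), E.length
        ≤ N.length + ∑ E ∈ 𝒟.erase D, E.length := by
      by_cases hNin : N ∈ 𝒟.erase D
      · rw [Finset.insert_eq_self.mpr hNin]; omega
      · rw [Finset.sum_insert hNin]
    omega

lemma Adm_delete {𝒟 : Finset (List V)} (hAdm : Adm G M c F 𝒟) {D : List V}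
    (hD : D ∈ 𝒟) (hno : ∀ e ∈ F, e ∉ cEdges D) :
    ∃ 𝒟', Adm G M c F 𝒟' ∧ ∑ E ∈ 𝒟', E.length < ∑ E ∈ 𝒟, E.length := by
  classical
  obtain ⟨hA1, hA2, hA3, hA4, hA5⟩ := hAdm
  have hDlen : 4 ≤ D.length := (hA1 D hD).2.1
  refine ⟨𝒟.erase D, ⟨?_, ?_, ?_, ?_, ?_⟩, ?_⟩
  · exact fun E hE => hA1 E (Finset.mem_of_mem_erase hE)
  · exact fun E hE => hA2 E (Finset.mem_of_mem_erase hE)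
  · exact Set.Pairwise.mono (by simp [Finset.erase_subset]) hA3
  · intro f hf
    have := hA4 hf
    rw [Ecyc, Finset.mem_biUnion] at this
    obtain ⟨E, hE, hfe⟩ := this
    have hED : E ≠ D := by
      rintro rfl
      exact hno f hf hfe
    rw [Ecyc, Finset.mem_biUnion]
    exact ⟨E, Finset.mem_erase.mpr ⟨hED, hE⟩, hfe⟩
  · exact fun E hE => hA5 E (Finset.mem_of_mem_erase hE)
  · have hsum : ∑ E ∈ 𝒟.erase D, E.length + D.length = ∑ E ∈ 𝒟, E.length :=
      Finset.sum_erase_add 𝒟 _ hD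
    omega

end CS
end SecG2

section SecG3
variable {V : Type*} [Inhabited V] [DecidableEq V]
  {G : SimpleGraph V} {M : Set (Sym2 V)} {c : List V} {F : Finset (Sym2 V)}
set_option linter.unusedSectionVars false
namespace CS

lemma perD (α : ℕ)
    (hα : ∀ S : Finset V, (∀ u ∈ S, ∀ v ∈ S, ¬ G.Adj u v) → S.card ≤ α)
    (hα1 : 1 ≤ α)
    (hMu : ∀ v : V, ∃! e, e ∈ M ∧ v ∈ e)
    {𝒟 : Finset (List V)} (hAdm : Adm G M c F 𝒟)
    (hmin : ∀ 𝒟', Adm G M c F 𝒟' → ∑ E ∈ 𝒟, E.length ≤ ∑ E ∈ 𝒟', E.length)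
    {D : List V} (hD : D ∈ 𝒟) :
    1 ≤ (F ∩ cEdges D).card ∧
      D.length ≤ ((F ∩ cEdges D).card + 1) * (2 * hF α + 2) := by
  classical
  have hcD : AltCycle G M D := hAdm.1 D hD
  have hρ1 : 1 ≤ (F ∩ cEdges D).card := by
    by_contra hno
    have hempty : ∀ e ∈ F, e ∉ cEdges D := by
      intro e he hce
      have hmem : e ∈ F ∩ cEdges D := Finset.mem_inter.mpr ⟨he, hce⟩
      have := Finset.card_pos.mpr ⟨e, hmem⟩
      omega
    obtain ⟨𝒟', h1, h2⟩ := Adm_delete hAdm hD hempty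
    have := hmin 𝒟' h1
    omega
  refine ⟨hρ1, ?_⟩
  set ρ := (F ∩ cEdges D).card with hρdef
  set h := hF α with hhdef
  set B := 2 * h + 2 with hBdef
  by_contra hbig
  push_neg at hbig
  set P := toP D with hPdef
  have hPC : PC G M P := altCycle_PC hcD
  have hLP : toL P = D := toL_toP D hcD.2.2.1
  have h2n : D.length = 2 * P.length := by rw [← hLP, toL_length]
  set n := P.length with hndef
  have hn2 : 2 ≤ n := hPC.len
  have hh3 : 3 ≤ h := hF_ge α hα1
  have hbign : (ρ + 1) * B < 2 * n := by omega
  -- find a clean block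
  have hclean : ∃ β, β < ρ + 1 ∧ ∀ z, β * B ≤ z → z < β * B + B → sE P z ∉ F := by
    by_contra hno
    push_neg at hno
    set zf : ℕ → ℕ := fun β => if hβ : β < ρ + 1 then (hno β hβ).choose else 0 with hzf
    have hzf1 : ∀ β, β < ρ + 1 → β * B ≤ zf β ∧ zf β < β * B + B ∧ sE P (zf β) ∈ F := by
      intro β hβ
      rw [hzf]; simp only [dif_pos hβ]
      obtain ⟨h1, h2, h3⟩ := (hno β hβ).choose_spec
      exact ⟨h1, h2, h3⟩
    have hzbound : ∀ β, β < ρ + 1 → zf β < 2 * n := by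
      intro β hβ
      obtain ⟨h1, h2, h3⟩ := hzf1 β hβ
      have e1 : β * B + B = (β + 1) * B := by ring
      have e2 : (β + 1) * B ≤ (ρ + 1) * B := Nat.mul_le_mul_right _ (by omega)
      omega
    have hcard : (Finset.range (ρ + 1)).card ≤ (F ∩ cEdges D).card := by
      apply Finset.card_le_card_of_injOn (fun β => sE P (zf β))
      · intro β hβ
        rw [Finset.coe_range, Set.mem_Iio] at hβ
        obtain ⟨h1, h2, h3⟩ := hzf1 β hβ
        refine Finset.mem_inter.mpr ⟨h3, ?_⟩
        rw [← hLP]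
        exact sE_mem P (zf β) (hzbound β hβ)
      · intro β hβ β' hβ' heq
        rw [Finset.coe_range, Set.mem_Iio] at hβ hβ'
        by_contra hne
        obtain ⟨h1, h2, h3⟩ := hzf1 β hβ
        obtain ⟨h1', h2', h3'⟩ := hzf1 β' hβ'
        have hzeq : zf β = zf β' :=
          sE_inj hPC (hzbound β hβ) (hzbound β' hβ') heq
        rcases Nat.lt_or_ge β β' with hlt | hge
        · have e1 : (β + 1) * B ≤ β' * B := Nat.mul_le_mul_right _ (by omega)
          have e2 : β * B + B = (β + 1) * B := by ring
          omega
        · have hlt : β' < β := by omega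
          have e1 : (β' + 1) * B ≤ β * B := Nat.mul_le_mul_right _ (by omega)
          have e2 : β' * B + B = (β' + 1) * B := by ring
          omega
    rw [Finset.card_range] at hcard
    omega
  obtain ⟨β, hβ, hcleanblk⟩ := hclean
  have hblock2 : β * B + B ≤ 2 * n := by
    have e1 : β * B + B = (β + 1) * B := by ring
    have e2 : (β + 1) * B ≤ (ρ + 1) * B := Nat.mul_le_mul_right _ (by omega)
    omega
  set d := (β * B + 1) / 2 with hddef
  have hd1 : β * B ≤ 2 * d := by omega
  have hd2 : 2 * d + 2 * h < β * B + B := by omega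
  have hdh : d + h < n := by omega
  have hslot : ∀ j, j ≤ 2 * h → sE P (2 * d + j) ∉ F := by
    intro j hj
    exact hcleanblk _ (by omega) (by omega)
  have hnlarge : h + 2 ≤ n := by
    have e2 : 2 * B ≤ (ρ + 1) * B := Nat.mul_le_mul_right _ (by omega)
    omega
  set X := P.take d with hXdef
  set A := (P.drop d).take (h + 1) with hAdef
  set Y := P.drop (d + (h + 1)) with hYdef
  have hXlen : X.length = d := List.length_take_of_le (by omega)
  have hAlen : A.length = h + 1 := by
    rw [hAdef, List.length_take_of_le (by rw [List.length_drop]; omega)]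
  have hdecomp : X ++ A ++ Y = P := by
    have e0 : Y = (P.drop d).drop (h + 1) := by rw [hYdef, List.drop_drop]
    rw [List.append_assoc, hXdef, e0, hAdef, List.take_append_drop,
      List.take_append_drop]
  have hAD : ∀ i, i ≤ h → A.getD i jk = P.getD (d + i) jk := by
    intro i hi
    rw [hAdef, getD_take' _ _ _ (by omega) (by rw [List.length_drop]; omega),
      getD_drop' P d i (by omega)]
  have hAne : A ≠ [] := by
    intro hA0; have := congrArg List.length hA0; rw [hAlen] at this; simp at this
  have hPC' : PC G M (X ++ A ++ Y) := by rw [hdecomp]; exact hPC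
  have hXY : X ≠ [] ∨ Y ≠ [] := by
    rcases Nat.eq_zero_or_pos d with hd0 | hdpos
    · right
      intro hY0
      have := congrArg List.length hY0
      rw [hYdef, List.length_drop] at this
      simp at this
      omega
    · left
      intro hX0
      have := congrArg List.length hX0
      rw [hXdef, List.length_take_of_le (by omega)] at this
      simp at this
      omega
  have hsurg : ∀ A' : List (V × V), A' ≠ [] → A'.length < A.length →
      A'.headI.1 = A.headI.1 → (A'.getLastD jk).2 = (A.getLastD jk).2 →
      PC G M (X ++ A' ++ Y) → (∀ p ∈ A', p ∈ A ∨ Prod.swap p ∈ A) →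
      (∀ v ∈ toL (X ++ A' ++ Y), v ∈ toL (X ++ A ++ Y)) → False := by
    intro A' hne hlen hhead hlast hPCN hpairs hverts
    set N := toL (X ++ A' ++ Y) with hNdef
    have hNC : AltCycle G M N := hPCN.altCycle
    have hvert : ∀ v ∈ N, v ∈ D := by
      intro v hv
      have := hverts v hv
      rw [hdecomp, hLP] at this
      exact this
    have hMe : ∀ e ∈ cEdges N, e ∈ M → e ∈ cEdges D := by
      have hmain := M_edges_sub (P := X ++ A ++ Y) hPCN ?_
      · intro e he hm
        have h2 := hmain e he hm
        rw [hdecomp, hLP] at h2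
        exact h2
      · intro p hp
        rcases List.mem_append.mp hp with hp' | hpY
        · rcases List.mem_append.mp hp' with hpX | hpA'
          · exact Or.inl (by simp [hpX])
          · rcases hpairs p hpA' with hh | hh
            · exact Or.inl (by simp [hh])
            · exact Or.inr (by simp [hh])
        · exact Or.inl (by simp [hpY])
    have hkept : ∀ e ∈ F, e ∈ cEdges D → e ∈ cEdges N := by
      intro e heF heD
      rw [← hLP, ← hdecomp] at heD
      rcases kept_edges X A A' Y hAne hne hhead hlast e heD with hk | hk | hk
      · exact hk
      · obtain ⟨j, hjA, rfl⟩ := hk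
        rw [hAlen] at hjA
        exfalso
        apply hslot (2 * j) (by omega)
        have heq : pE A j = sE P (2 * d + 2 * j) := by
          unfold sE
          rw [if_pos (by omega)]
          unfold pE
          rw [show (2 * d + 2 * j) / 2 = d + j by omega, hAD j (by omega)]
        rw [← heq]
        exact heF
      · obtain ⟨j, hjA, rfl⟩ := hk
        rw [hAlen] at hjA
        exfalso
        apply hslot (2 * j + 1) (by omega)
        have heq : s((A.getD j jk).2, (A.getD (j + 1) jk).1)
            = sE P (2 * d + (2 * j + 1)) := by
          unfold sE
          rw [if_neg (by omega)]
          unfold cE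
          rw [show (2 * d + (2 * j + 1)) / 2 = d + j by omega]
          rw [show (d + j + 1) % n = d + (j + 1) by
            rw [Nat.mod_eq_of_lt (by omega)]; omega]
          rw [hAD j (by omega), hAD (j + 1) (by omega)]
        rw [← heq]
        exact heF
    have hshort : N.length < D.length := by
      rw [hNdef, toL_length, h2n]
      have hlt : (X ++ A' ++ Y).length < (X ++ A ++ Y).length := by
        simp only [List.length_append]; omega
      rw [hdecomp] at hlt
      omega
    obtain ⟨𝒟', h1, h2⟩ := Adm_replace hAdm hD hNC hvert hMe hkept hshort
    have := hmin 𝒟' h1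
    omega
  by_cases hS1e : ∃ s t, s + 2 ≤ t ∧ t < h + 1 ∧
      G.Adj (A.getD s jk).2 (A.getD t jk).1
  · obtain ⟨s, t, h1, h2, h3⟩ := hS1e
    obtain ⟨A', e1, e2, e3, e4, e5, e6, e7⟩ :=
      surgeryS1 hMu X A Y hPC' hXY s t h1 (by omega) h3
    exact hsurg A' e1 e2 e3 e4 e5 e6 e7
  by_cases hS2e : ∃ x q t r, x < q ∧ q ≤ t ∧ t < r ∧ r < h + 1 ∧
      (x + 2 ≤ q ∨ t + 2 ≤ r) ∧ G.Adj (A.getD x jk).2 (A.getD t jk).2 ∧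
      G.Adj (A.getD q jk).1 (A.getD r jk).1
  · obtain ⟨x, q, t, r, h1, h2, h3, h4, h5, h6, h7⟩ := hS2e
    obtain ⟨A', e1, e2, e3, e4, e5, e6, e7⟩ :=
      surgeryS2 hMu X A Y hPC' hXY x q t r h1 h2 h3 (by omega) h5 h6 h7
    exact hsurg A' e1 e2 e3 e4 e5 e6 e7
  push_neg at hS1e hS2e
  have hai : ∀ i j, i < h + 1 → j < h + 1 →
      (A.getD i jk).2 = (A.getD j jk).2 → i = j := by
    intro i j hi hj he
    rw [hAD i (by omega), hAD j (by omega)] at he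
    have := nodup_snd hPC.nodup (show d + i < n by omega)
      (show d + j < n by omega) he
    omega
  have hbi : ∀ i j, i < h + 1 → j < h + 1 →
      (A.getD i jk).1 = (A.getD j jk).1 → i = j := by
    intro i j hi hj he
    rw [hAD i (by omega), hAD j (by omega)] at he
    have := nodup_fst hPC.nodup (show d + i < n by omega)
      (show d + j < n by omega) he
    omega
  have hab : ∀ i j, i < h + 1 → j < h + 1 →
      (A.getD i jk).2 ≠ (A.getD j jk).1 := by
    intro i j hi hj he
    rw [hAD i (by omega), hAD j (by omega)] at he
    exact nodup_cross hPC.nodup (show d + j < n by omega)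
      (show d + i < n by omega) he.symm
  obtain ⟨S, hScard, -, hSadj⟩ :=
    indepClaim G (fun i => (A.getD i jk).2) (fun i => (A.getD i jk).1) (h + 1)
      hS1e
      (fun x q t r h1 h2 h3 h4 h5 hand => hS2e x q t r h1 h2 h3 h4 h5 hand.1 hand.2)
      hai hbi hab α hα1 0 h (by omega) (by omega)
  have hind : ∀ u ∈ S, ∀ v ∈ S, ¬ G.Adj u v := by
    intro u hu v hv
    by_cases huv : u = v
    · subst huv; exact G.irrefl
    · exact hSadj u hu v hv huv
  have := hα S hind
  omega

end CS
end SecG3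

section SecH
variable {V : Type*} [Inhabited V] [DecidableEq V]
  {G : SimpleGraph V} {M : Set (Sym2 V)} {c : List V}
set_option linter.unusedSectionVars false
namespace CS

lemma perCycle (α : ℕ)
    (hα : ∀ S : Finset V, (∀ u ∈ S, ∀ v ∈ S, ¬ G.Adj u v) → S.card ≤ α)
    (hα1 : 1 ≤ α) (hMu : ∀ v : V, ∃! e, e ∈ M ∧ v ∈ e)
    (hc : AltCycle G M c) (F : Finset (Sym2 V)) (hFsub : F ⊆ cEdges c) :
    ∃ 𝒟 : Finset (List V), Adm G M c F 𝒟 ∧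
      (∑ D ∈ 𝒟, D.length) ≤ 4 ^ (α + 1) * F.card := by
  classical
  have hex : ∃ n : ℕ, ∃ 𝒟, Adm G M c F 𝒟 ∧ (∑ D ∈ 𝒟, D.length) = n := by
    refine ⟨_, {c}, ⟨?_, ?_, ?_, ?_, ?_⟩, rfl⟩
    · intro D hD; rw [Finset.mem_singleton] at hD; subst hD; exact hc
    · intro D hD v hv; rw [Finset.mem_singleton] at hD; subst hD; exact hv
    · rw [Finset.coe_singleton]; exact Set.pairwise_singleton _ _
    · intro f hf
      rw [Ecyc, Finset.mem_biUnion]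
      exact ⟨c, Finset.mem_singleton_self c, hFsub hf⟩
    · intro D hD e he hm; rw [Finset.mem_singleton] at hD; subst hD; exact he
  obtain ⟨𝒟, hAdm, htot⟩ := Nat.find_spec hex
  have hmin : ∀ 𝒟', Adm G M c F 𝒟' → ∑ E ∈ 𝒟, E.length ≤ ∑ E ∈ 𝒟', E.length := by
    intro 𝒟' h'
    rw [htot]
    exact Nat.find_min' hex ⟨𝒟', h', rfl⟩
  refine ⟨𝒟, hAdm, ?_⟩
  have hDlen : ∀ D ∈ 𝒟, D.length ≤ (F ∩ cEdges D).card * (4 * hF α + 4) := by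
    intro D hD
    obtain ⟨h1, h2⟩ := perD α hα hα1 hMu hAdm hmin hD
    calc D.length ≤ ((F ∩ cEdges D).card + 1) * (2 * hF α + 2) := h2
    _ ≤ (2 * (F ∩ cEdges D).card) * (2 * hF α + 2) :=
        Nat.mul_le_mul_right _ (by omega)
    _ = (F ∩ cEdges D).card * (4 * hF α + 4) := by ring
  have hdisjE : ∀ D ∈ 𝒟, ∀ E ∈ 𝒟, D ≠ E →
      Disjoint (F ∩ cEdges D) (F ∩ cEdges E) := by
    intro D hD E hE hne
    have hDne : D ≠ [] := by
      have := (hAdm.1 D hD).2.1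
      intro hnil; rw [hnil] at this; simp at this
    have := cEdges_disj hDne (hAdm.2.2.1 hD hE hne)
    exact Disjoint.mono Finset.inter_subset_right Finset.inter_subset_right this
  have hsum2 : ∑ D ∈ 𝒟, (F ∩ cEdges D).card ≤ F.card := by
    rw [← Finset.card_biUnion hdisjE]
    apply Finset.card_le_card
    intro e he
    rw [Finset.mem_biUnion] at he
    obtain ⟨D, hD, he'⟩ := he
    exact (Finset.mem_inter.mp he').1
  calc ∑ D ∈ 𝒟, D.length ≤ ∑ D ∈ 𝒟, (F ∩ cEdges D).card * (4 * hF α + 4) :=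
      Finset.sum_le_sum hDlen
  _ = (∑ D ∈ 𝒟, (F ∩ cEdges D).card) * (4 * hF α + 4) := by rw [Finset.sum_mul]
  _ ≤ F.card * (4 * hF α + 4) := Nat.mul_le_mul_right _ hsum2
  _ ≤ F.card * 4 ^ (α + 1) := Nat.mul_le_mul_left _ (arith_bound α hα1)
  _ = 4 ^ (α + 1) * F.card := Nat.mul_comm _ _

end CS
end SecH

/-- Proposition `cycleshortening`: any set of disjoint `M`-alternating cycles with `k` red
edges can be replaced by one of total size at most `k·4^(α+1)` containing all those red
edges, where all new edges are non-matching edges. -/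
theorem stmt_10 {V : Type*} [Inhabited V] [DecidableEq V] (G : SimpleGraph V)
    (α : ℕ) (hα : ∀ S : Finset V, (∀ u ∈ S, ∀ v ∈ S, ¬ G.Adj u v) → S.card ≤ α)
    (M : Set (Sym2 V))
    (hM : M ⊆ G.edgeSet ∧ ∀ v : V, ∃! e, e ∈ M ∧ v ∈ e)
    (w : Sym2 V → ℕ) (red : Set (Sym2 V)) [DecidablePred (· ∈ red)]
    (𝒞 : Finset (List V)) (h𝒞 : ∀ c ∈ 𝒞, AltCycle G M c)
    (hdisj : (𝒞 : Set (List V)).Pairwise fun c d => ∀ v, v ∈ c → v ∉ d)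
    (R : Finset (Sym2 V)) (hR : R = (Ecyc 𝒞).filter (· ∈ red))
    (k : ℕ) (hk : R.card = k) :
    ∃ 𝒞' : Finset (List V), (∀ c ∈ 𝒞', AltCycle G M c) ∧
      (𝒞' : Set (List V)).Pairwise (fun c d => ∀ v, v ∈ c → v ∉ d) ∧
      R ⊆ Ecyc 𝒞' ∧ (Ecyc 𝒞').card ≤ k * 4 ^ (α + 1) ∧
      ∀ e ∈ Ecyc 𝒞' \ Ecyc 𝒞, e ∉ M := by
  classical
  have hα1 : 1 ≤ α := by
    have h1 := hα {default} ?_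
    · simpa using h1
    · intro u hu v hv
      rw [Finset.mem_singleton] at hu hv
      subst hu; subst hv
      exact G.irrefl
  have hch : ∀ c ∈ 𝒞, ∃ 𝒟 : Finset (List V),
      CS.Adm G M c ((cEdges c).filter (· ∈ red)) 𝒟 ∧
      (∑ D ∈ 𝒟, D.length) ≤ 4 ^ (α + 1) * ((cEdges c).filter (· ∈ red)).card :=
    fun c hc => CS.perCycle α hα hα1 hM.2 (h𝒞 c hc) _ (Finset.filter_subset _ _)
  choose! Dfam hAdmf hbndf using hch
  have hcyc_ne : ∀ c ∈ 𝒞, c ≠ [] := by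
    intro c hc hnil
    have := (h𝒞 c hc).2.1
    rw [hnil] at this; simp at this
  refine ⟨𝒞.biUnion Dfam, ?_, ?_, ?_, ?_, ?_⟩
  · intro D hD
    rw [Finset.mem_biUnion] at hD
    obtain ⟨c, hc, hDc⟩ := hD
    exact (hAdmf c hc).1 D hDc
  · intro D hD E hE hne
    rw [Finset.mem_coe, Finset.mem_biUnion] at hD hE
    obtain ⟨c, hc, hDc⟩ := hD
    obtain ⟨c', hc', hEc⟩ := hE
    by_cases hcc : c = c'
    · subst hcc
      exact (hAdmf c hc).2.2.1 (Finset.mem_coe.mpr hDc) (Finset.mem_coe.mpr hEc) hne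
    · intro v hvD hvE
      have h1 : v ∈ c := (hAdmf c hc).2.1 D hDc v hvD
      have h2 : v ∈ c' := (hAdmf c' hc').2.1 E hEc v hvE
      exact hdisj (Finset.mem_coe.mpr hc) (Finset.mem_coe.mpr hc') hcc v h1 h2
  · intro f hf
    rw [hR, Finset.mem_filter] at hf
    obtain ⟨hfE, hfred⟩ := hf
    rw [Ecyc, Finset.mem_biUnion] at hfE
    obtain ⟨c, hc, hfc⟩ := hfE
    have hfF : f ∈ (cEdges c).filter (· ∈ red) :=
      Finset.mem_filter.mpr ⟨hfc, hfred⟩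
    have := (hAdmf c hc).2.2.2.1 hfF
    rw [Ecyc, Finset.mem_biUnion] at this
    obtain ⟨D, hD, hfD⟩ := this
    rw [Ecyc, Finset.mem_biUnion]
    exact ⟨D, Finset.mem_biUnion.mpr ⟨c, hc, hD⟩, hfD⟩
  · -- cardinality
    have hEcyc : Ecyc (𝒞.biUnion Dfam) = 𝒞.biUnion (fun c => Ecyc (Dfam c)) :=
      Finset.biUnion_biUnion 𝒞 Dfam cEdges
    have hcElen : ∀ D : List V, (cEdges D).card ≤ D.length := by
      intro D
      unfold cEdges
      refine le_trans (List.toFinset_card_le _) ?_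
      rw [List.length_map, List.length_range]
    have hsumk : ∑ c ∈ 𝒞, ((cEdges c).filter (· ∈ red)).card = k := by
      rw [← hk, hR, Ecyc, Finset.filter_biUnion]
      rw [Finset.card_biUnion]
      intro c hc c' hc' hcc
      exact Disjoint.mono (Finset.filter_subset _ _) (Finset.filter_subset _ _)
        (CS.cEdges_disj (hcyc_ne c hc)
          (hdisj (Finset.mem_coe.mpr hc) (Finset.mem_coe.mpr hc') hcc))
    calc (Ecyc (𝒞.biUnion Dfam)).card
        ≤ ∑ c ∈ 𝒞, (Ecyc (Dfam c)).card := by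
          rw [hEcyc]; exact Finset.card_biUnion_le
    _ ≤ ∑ c ∈ 𝒞, 4 ^ (α + 1) * ((cEdges c).filter (· ∈ red)).card := by
          refine Finset.sum_le_sum (fun c hc => ?_)
          refine le_trans ?_ (hbndf c hc)
          refine le_trans Finset.card_biUnion_le ?_
          exact Finset.sum_le_sum (fun D _ => hcElen D)
    _ = 4 ^ (α + 1) * ∑ c ∈ 𝒞, ((cEdges c).filter (· ∈ red)).card := by
          rw [Finset.mul_sum]
    _ = k * 4 ^ (α + 1) := by rw [hsumk, Nat.mul_comm]
  · intro e he
    rw [Finset.mem_sdiff] at he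
    obtain ⟨h1, h2⟩ := he
    intro hm
    rw [Ecyc, Finset.mem_biUnion] at h1
    obtain ⟨D, hD, heD⟩ := h1
    rw [Finset.mem_biUnion] at hD
    obtain ⟨c, hc, hDc⟩ := hD
    have := (hAdmf c hc).2.2.2.2 D hDc e heD hm
    apply h2
    rw [Ecyc, Finset.mem_biUnion]
    exact ⟨c, hc, this⟩
end

section
/- Let G be a graph with positive integer edge weights w, and construct G′ by replacing each edge e with a path of length 2·w(e) − 1 whose edges are alternately colored red and blue, starting and ending with red. Then G has a perfect matching of total weight exactly W if and only if G′ has a perfect matching with exactly W red edges. -/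
/-- `M` is a perfect matching of `H` on the vertices satisfying `valid`: its edges are
edges of `H` and every valid vertex lies on exactly one of them. -/
def IsPMOn {α : Type*} (H : SimpleGraph α) (valid : α → Prop)
    (M : Finset (Sym2 α)) : Prop :=
  (↑M : Set (Sym2 α)) ⊆ H.edgeSet ∧ ∀ v : α, valid v → ∃! e, e ∈ M ∧ v ∈ e

namespace Subdivide

variable {V : Type*}

/-- Adjacency of the subdivided graph `G'`: each edge `e` of `G` (with chosen endpoints
`fst e` and `snd e`) is replaced by a path of length `2·w(e) − 1`, whose internal
vertices are `(e, 0), …, (e, 2·w(e) − 3)`. -/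
def rel (G : SimpleGraph V) (w : Sym2 V → ℕ) (fst snd : Sym2 V → V) :
    V ⊕ (Sym2 V × ℕ) → V ⊕ (Sym2 V × ℕ) → Prop
  | Sum.inl u, Sum.inl v => G.Adj u v ∧ w s(u, v) = 1
  | Sum.inl u, Sum.inr (e, i) =>
      e ∈ G.edgeSet ∧ 2 ≤ w e ∧
        ((u = fst e ∧ i = 0) ∨ (u = snd e ∧ i = 2 * w e - 3))
  | Sum.inr (e, i), Sum.inl u =>
      e ∈ G.edgeSet ∧ 2 ≤ w e ∧
        ((u = fst e ∧ i = 0) ∨ (u = snd e ∧ i = 2 * w e - 3))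
  | Sum.inr (e, i), Sum.inr (e', j) =>
      e = e' ∧ e ∈ G.edgeSet ∧
        ((j = i + 1 ∧ j ≤ 2 * w e - 3) ∨ (i = j + 1 ∧ i ≤ 2 * w e - 3))

/-- The vertices of the subdivided graph: original vertices together with the internal
vertices `(e, i)`, `i ≤ 2·w(e) − 3`, of the path replacing an edge `e` of `G`. -/
def valid (G : SimpleGraph V) (w : Sym2 V → ℕ) : V ⊕ (Sym2 V × ℕ) → Prop
  | Sum.inl _ => True
  | Sum.inr (e, i) => e ∈ G.edgeSet ∧ 2 ≤ w e ∧ i ≤ 2 * w e - 3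

/-- The red edges of the subdivided graph: in the path of length `2·w(e) − 1` replacing
an edge `e`, the edges at even positions (the first, the last, and every second one in
between) are red, so that the path starts and ends with red and has `w(e)` red edges. -/
def red (G : SimpleGraph V) (w : Sym2 V → ℕ) (fst snd : Sym2 V → V) :
    Set (Sym2 (V ⊕ (Sym2 V × ℕ))) :=
  {x | ∃ e ∈ G.edgeSet,
    (w e = 1 ∧ x = s(Sum.inl (fst e), Sum.inl (snd e))) ∨
    (2 ≤ w e ∧ x = s(Sum.inl (fst e), Sum.inr (e, 0))) ∨
    (2 ≤ w e ∧ x = s(Sum.inr (e, 2 * w e - 3), Sum.inl (snd e))) ∨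
    (∃ i, i % 2 = 1 ∧ i + 1 ≤ 2 * w e - 3 ∧ x = s(Sum.inr (e, i), Sum.inr (e, i + 1)))}

end Subdivide

namespace SubAux
set_option linter.unusedSectionVars false
open Subdivide Sum

variable {V : Type*} [DecidableEq V] {G : SimpleGraph V} {w : Sym2 V → ℕ} {fst snd : Sym2 V → V}

lemma rel_symm {a b : V ⊕ (Sym2 V × ℕ)} (h : rel G w fst snd a b) : rel G w fst snd b a := by
  rcases a with a | ⟨e, i⟩ <;> rcases b with b | ⟨e', j⟩ <;> simp only [rel] at h ⊢
  · exact ⟨h.1.symm, by rw [Sym2.eq_swap]; exact h.2⟩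
  · exact h
  · exact h
  · obtain ⟨rfl, h2, h3⟩ := h; exact ⟨rfl, h2, h3.symm⟩

lemma adj_iff {a b : V ⊕ (Sym2 V × ℕ)} :
    (SimpleGraph.fromRel (rel G w fst snd)).Adj a b ↔ a ≠ b ∧ rel G w fst snd a b := by
  constructor
  · rintro ⟨h1, h2 | h2⟩
    exacts [⟨h1, h2⟩, ⟨h1, rel_symm h2⟩]
  · rintro ⟨h1, h2⟩; exact ⟨h1, Or.inl h2⟩

variable (hfs : ∀ e : Sym2 V, s(fst e, snd e) = e)

section
include hfs

lemma adj_fst_snd {e : Sym2 V} (he : e ∈ G.edgeSet) : G.Adj (fst e) (snd e) := by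
  rw [← SimpleGraph.mem_edgeSet, hfs]; exact he

lemma fst_ne_snd {e : Sym2 V} (he : e ∈ G.edgeSet) : fst e ≠ snd e :=
  (adj_fst_snd hfs he).ne

lemma mem_e_iff {e : Sym2 V} {v : V} : v ∈ e ↔ v = fst e ∨ v = snd e := by
  conv_lhs => rw [← hfs e]
  exact Sym2.mem_iff

end

/-- the `i`-th edge (0-indexed) of the path replacing `e`, in the case `2 ≤ w e`. -/
def edgeAt (w : Sym2 V → ℕ) (fst snd : Sym2 V → V) (e : Sym2 V) : ℕ → Sym2 (V ⊕ (Sym2 V × ℕ))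
  | 0 => s(Sum.inl (fst e), Sum.inr (e, 0))
  | (k+1) => if k + 1 = 2 * w e - 2 then s(Sum.inr (e, 2 * w e - 3), Sum.inl (snd e))
             else s(Sum.inr (e, k), Sum.inr (e, k + 1))

def pathRed (w : Sym2 V → ℕ) (fst snd : Sym2 V → V) (e : Sym2 V) :
    Finset (Sym2 (V ⊕ (Sym2 V × ℕ))) :=
  if w e = 1 then {s(Sum.inl (fst e), Sum.inl (snd e))}
  else insert s(Sum.inl (fst e), Sum.inr (e, 0))
    (insert s(Sum.inr (e, 2 * w e - 3), Sum.inl (snd e))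
      ((Finset.range (w e - 2)).image fun k => s(Sum.inr (e, 2*k+1), Sum.inr (e, 2*k+2))))

def pathBlue (w : Sym2 V → ℕ) (e : Sym2 V) : Finset (Sym2 (V ⊕ (Sym2 V × ℕ))) :=
  (Finset.range (w e - 1)).image fun k => s(Sum.inr (e, 2*k), Sum.inr (e, 2*k+1))


lemma not_inl_mem_pathBlue {e : Sym2 V} {v : V} {x} (hx : x ∈ pathBlue w e) :
    Sum.inl v ∉ x := by
  simp only [pathBlue, Finset.mem_image, Finset.mem_range] at hx
  obtain ⟨k, -, rfl⟩ := hx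
  simp [Sym2.mem_iff]

lemma inr_mem_pathBlue {e e' : Sym2 V} {i : ℕ} {x} (hx : x ∈ pathBlue w e')
    (hi : Sum.inr (e, i) ∈ x) : e = e' := by
  simp only [pathBlue, Finset.mem_image, Finset.mem_range] at hx
  obtain ⟨k, -, rfl⟩ := hx
  simp [Sym2.mem_iff] at hi
  tauto

lemma inl_mem_pathRed {e : Sym2 V} {v : V} {x} (hx : x ∈ pathRed w fst snd e)
    (hv : Sum.inl v ∈ x) : v = fst e ∨ v = snd e := by
  simp only [pathRed] at hx
  split_ifs at hx with h1
  · simp only [Finset.mem_singleton] at hx; subst hx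
    simpa [Sym2.mem_iff] using hv
  · simp only [Finset.mem_insert, Finset.mem_image, Finset.mem_range] at hx
    rcases hx with rfl | rfl | ⟨k, -, rfl⟩ <;> simp [Sym2.mem_iff] at hv <;> tauto

lemma inr_mem_pathRed {e e' : Sym2 V} {i : ℕ} {x} (hx : x ∈ pathRed w fst snd e')
    (hi : Sum.inr (e, i) ∈ x) : e = e' := by
  simp only [pathRed] at hx
  split_ifs at hx with h1
  · simp only [Finset.mem_singleton] at hx; subst hx; simp [Sym2.mem_iff] at hi
  · simp only [Finset.mem_insert, Finset.mem_image, Finset.mem_range] at hx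
    rcases hx with rfl | rfl | ⟨k, -, rfl⟩ <;> simp [Sym2.mem_iff] at hi <;> tauto

lemma pathRed_inl_unique {e : Sym2 V} {v : V} {x y} (hne : fst e ≠ snd e)
    (hx : x ∈ pathRed w fst snd e) (hy : y ∈ pathRed w fst snd e)
    (hvx : Sum.inl v ∈ x) (hvy : Sum.inl v ∈ y) : x = y := by
  simp only [pathRed] at hx hy
  split_ifs at hx hy with h1
  · simp only [Finset.mem_singleton] at hx hy; rw [hx, hy]
  · simp only [Finset.mem_insert, Finset.mem_image, Finset.mem_range] at hx hy
    rcases hx with rfl | rfl | ⟨k, -, rfl⟩ <;> rcases hy with rfl | rfl | ⟨k', -, rfl⟩ <;>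
      simp_all [Sym2.mem_iff]

lemma pathRed_inr_unique {e : Sym2 V} {i : ℕ} {x y} (hw2 : 2 ≤ w e)
    (hx : x ∈ pathRed w fst snd e) (hy : y ∈ pathRed w fst snd e)
    (hvx : Sum.inr (e,i) ∈ x) (hvy : Sum.inr (e,i) ∈ y) : x = y := by
  have h1 : ¬ (w e = 1) := by omega
  simp only [pathRed, if_neg h1, Finset.mem_insert, Finset.mem_image, Finset.mem_range]
    at hx hy
  rcases hx with rfl | rfl | ⟨k, hk, rfl⟩ <;> rcases hy with rfl | rfl | ⟨k', hk', rfl⟩ <;>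
    simp_all [Sym2.mem_iff] <;> omega

lemma pathBlue_inr_unique {e : Sym2 V} {i : ℕ} {x y}
    (hx : x ∈ pathBlue w e) (hy : y ∈ pathBlue w e)
    (hvx : Sum.inr (e,i) ∈ x) (hvy : Sum.inr (e,i) ∈ y) : x = y := by
  simp only [pathBlue, Finset.mem_image, Finset.mem_range] at hx hy
  obtain ⟨k, -, rfl⟩ := hx; obtain ⟨k', -, rfl⟩ := hy
  simp_all [Sym2.mem_iff]; omega

lemma pathRed_inr_exists {e : Sym2 V} {i : ℕ} (hw2 : 2 ≤ w e) (hi : i ≤ 2 * w e - 3) :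
    ∃ x ∈ pathRed w fst snd e, Sum.inr (e,i) ∈ x := by
  have h1 : ¬ (w e = 1) := by omega
  simp only [pathRed, if_neg h1, Finset.mem_insert, Finset.mem_image, Finset.mem_range]
  rcases eq_or_ne i 0 with rfl | hi0
  · exact ⟨_, Or.inl rfl, by simp⟩
  rcases eq_or_ne i (2 * w e - 3) with rfl | hilast
  · exact ⟨_, Or.inr (Or.inl rfl), by simp⟩
  rcases Nat.even_or_odd i with he | ho
  · obtain ⟨k, rfl⟩ := he
    refine ⟨_, Or.inr (Or.inr ⟨k - 1, by omega, rfl⟩), ?_⟩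
    have h2 : 2 * (k-1) + 2 = k + k := by omega
    rw [h2]; simp
  · obtain ⟨k, rfl⟩ := ho
    refine ⟨_, Or.inr (Or.inr ⟨k, by omega, rfl⟩), ?_⟩; simp

lemma pathBlue_inr_exists {e : Sym2 V} {i : ℕ} (hw2 : 2 ≤ w e) (hi : i ≤ 2 * w e - 3) :
    ∃ x ∈ pathBlue w e, Sum.inr (e,i) ∈ x := by
  simp only [pathBlue, Finset.mem_image, Finset.mem_range]
  rcases Nat.even_or_odd i with he | ho
  · obtain ⟨k, rfl⟩ := he
    refine ⟨_, ⟨k, by omega, rfl⟩, ?_⟩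
    have h2 : 2 * k = k + k := by omega
    rw [h2]; simp
  · obtain ⟨k, rfl⟩ := ho
    refine ⟨_, ⟨k, by omega, rfl⟩, ?_⟩; simp

lemma pathRed_inl_exists {e : Sym2 V} {v : V} (hv : v = fst e ∨ v = snd e) :
    ∃ x ∈ pathRed w fst snd e, Sum.inl v ∈ x := by
  rcases hv with rfl | rfl
  · by_cases h1 : w e = 1
    · exact ⟨s(Sum.inl (fst e), Sum.inl (snd e)), by simp [pathRed, h1], by simp⟩
    · exact ⟨s(Sum.inl (fst e), Sum.inr (e,0)), by simp [pathRed, h1], by simp⟩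
  · by_cases h1 : w e = 1
    · exact ⟨s(Sum.inl (fst e), Sum.inl (snd e)), by simp [pathRed, h1], by simp⟩
    · exact ⟨s(Sum.inr (e, 2*w e - 3), Sum.inl (snd e)), by simp [pathRed, h1], by simp⟩

include hfs in
lemma pathRed_subset_edgeSet {e : Sym2 V} (he : e ∈ G.edgeSet) (hw1 : 1 ≤ w e) :
    (pathRed w fst snd e : Set _) ⊆ (SimpleGraph.fromRel (rel G w fst snd)).edgeSet := by
  intro x hx
  simp only [Finset.mem_coe, pathRed] at hx
  split_ifs at hx with h1
  · simp only [Finset.mem_singleton] at hx; subst hx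
    rw [SimpleGraph.mem_edgeSet, adj_iff]
    refine ⟨by simpa using fst_ne_snd hfs he, adj_fst_snd hfs he, ?_⟩
    rw [hfs]; exact h1
  · have hw2' : ¬ (w e = 1) := h1
    simp only [Finset.mem_insert, Finset.mem_image, Finset.mem_range] at hx
    rcases hx with rfl | rfl | ⟨k, hk, rfl⟩ <;> rw [SimpleGraph.mem_edgeSet, adj_iff] <;>
      refine ⟨by simp, ?_⟩
    · exact ⟨he, by omega, Or.inl ⟨rfl, rfl⟩⟩
    · exact ⟨he, by omega, Or.inr ⟨rfl, rfl⟩⟩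
    · exact ⟨rfl, he, Or.inl ⟨rfl, by omega⟩⟩

lemma pathBlue_subset_edgeSet {e : Sym2 V} (he : e ∈ G.edgeSet) :
    (pathBlue w e : Set _) ⊆ (SimpleGraph.fromRel (rel G w fst snd)).edgeSet := by
  intro x hx
  simp only [Finset.mem_coe, pathBlue, Finset.mem_image, Finset.mem_range] at hx
  obtain ⟨k, hk, rfl⟩ := hx
  rw [SimpleGraph.mem_edgeSet, adj_iff]
  exact ⟨by simp, rfl, he, Or.inl ⟨rfl, by omega⟩⟩


lemma exists_eq_of_mem {α : Type*} {H : SimpleGraph α} {f : Sym2 α} (hf : f ∈ H.edgeSet)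
    {t : α} (ht : t ∈ f) : ∃ x, H.Adj t x ∧ f = s(t, x) := by
  induction f using Sym2.ind with
  | _ a b =>
    rw [Sym2.mem_iff] at ht
    rcases ht with rfl | rfl
    · exact ⟨b, hf, rfl⟩
    · exact ⟨a, (H.mem_edgeSet.mp hf).symm, Sym2.eq_swap⟩

lemma edge_of_inr_mem {f} (hf : f ∈ (SimpleGraph.fromRel (rel G w fst snd)).edgeSet)
    {e : Sym2 V} {i : ℕ} (ht : Sum.inr (e, i) ∈ f) :
    e ∈ G.edgeSet ∧ 2 ≤ w e ∧ i ≤ 2 * w e - 3 ∧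
      (f = edgeAt w fst snd e i ∨ f = edgeAt w fst snd e (i + 1)) := by
  obtain ⟨x, hadj, rfl⟩ := exists_eq_of_mem hf ht
  rw [adj_iff] at hadj
  obtain ⟨hne, hrel⟩ := hadj
  rcases x with u | ⟨e', j⟩
  · obtain ⟨he, hw2, h | h⟩ := hrel
    · obtain ⟨rfl, rfl⟩ := h
      refine ⟨he, hw2, by omega, Or.inl ?_⟩
      rw [edgeAt, Sym2.eq_swap]
    · obtain ⟨rfl, rfl⟩ := h
      refine ⟨he, hw2, le_refl _, Or.inr ?_⟩
      have h2 : 2 * w e - 3 + 1 = (2 * w e - 3) + 1 := rfl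
      rw [edgeAt, if_pos (by omega), Sym2.eq_swap]
  · obtain ⟨rfl, he, h | h⟩ := hrel
    · obtain ⟨rfl, hj⟩ := h
      have hw2 : 2 ≤ w e := by omega
      refine ⟨he, hw2, by omega, Or.inr ?_⟩
      rw [edgeAt, if_neg (by omega)]
    · obtain ⟨rfl, hj⟩ := h
      have hw2 : 2 ≤ w e := by omega
      refine ⟨he, hw2, hj, Or.inl ?_⟩
      have h2 : j + 1 = j + 1 := rfl
      rw [edgeAt, if_neg (by omega), Sym2.eq_swap]

lemma edgeAt_ne {e : Sym2 V} {i : ℕ} (hw2 : 2 ≤ w e) (hi : i + 1 ≤ 2 * w e - 2) :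
    edgeAt w fst snd e i ≠ edgeAt w fst snd e (i + 1) := by
  rcases i with _ | k
  · rw [edgeAt, edgeAt, if_neg (by omega)]
    simp [Sym2.eq_iff]
  · rw [edgeAt, edgeAt, if_neg (by omega)]
    by_cases h : k + 1 + 1 = 2 * w e - 2
    · rw [if_pos h]; simp [Sym2.eq_iff]
    · rw [if_neg h]; simp [Sym2.eq_iff]; omega

lemma inr_mem_edgeAt {e : Sym2 V} {i : ℕ} (hw2 : 2 ≤ w e) (hi : i ≤ 2 * w e - 3) :
    Sum.inr (e, i) ∈ edgeAt w fst snd e i ∧ Sum.inr (e, i) ∈ edgeAt w fst snd e (i + 1) := by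
  constructor
  · rcases i with _ | k
    · rw [edgeAt]; simp
    · rw [edgeAt, if_neg (by omega)]; simp
  · rw [edgeAt]
    by_cases h : i + 1 = 2 * w e - 2
    · rw [if_pos h]; simp [Sym2.mem_iff]; omega
    · rw [if_neg h]; simp


lemma step {M' : Finset (Sym2 (V ⊕ (Sym2 V × ℕ)))}
    (hM' : IsPMOn (SimpleGraph.fromRel (rel G w fst snd)) (valid G w) M')
    {e : Sym2 V} (he : e ∈ G.edgeSet) (hw2 : 2 ≤ w e) {i : ℕ} (hi : i ≤ 2 * w e - 3) :
    edgeAt w fst snd e i ∈ M' ↔ ¬ edgeAt w fst snd e (i + 1) ∈ M' := by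
  obtain ⟨f, ⟨hfM, hfm⟩, huniq⟩ := hM'.2 (Sum.inr (e, i)) ⟨he, hw2, hi⟩
  have hmem := inr_mem_edgeAt (w := w) (fst := fst) (snd := snd) (e := e) hw2 hi
  have hne := edgeAt_ne (w := w) (fst := fst) (snd := snd) (e := e) (i := i) hw2 (by omega)
  constructor
  · intro h1 h2
    have e1 := huniq _ ⟨h1, hmem.1⟩
    have e2 := huniq _ ⟨h2, hmem.2⟩
    exact hne (e1.trans e2.symm)
  · intro h2
    rcases (edge_of_inr_mem (hM'.1 hfM) hfm).2.2.2 with h | h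
    · rwa [h] at hfM
    · rw [h] at hfM; exact absurd hfM h2

lemma alt {M' : Finset (Sym2 (V ⊕ (Sym2 V × ℕ)))}
    (hM' : IsPMOn (SimpleGraph.fromRel (rel G w fst snd)) (valid G w) M')
    {e : Sym2 V} (he : e ∈ G.edgeSet) (hw2 : 2 ≤ w e) {j : ℕ} (hj : j ≤ 2 * w e - 2) :
    (edgeAt w fst snd e j ∈ M' ↔ (j % 2 = 0 ↔ edgeAt w fst snd e 0 ∈ M')) := by
  induction j with
  | zero => simp
  | succ k ih =>
    have ih' := ih (by omega)
    have hs := step hM' he hw2 (i := k) (by omega)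
    have hpar : ((k + 1) % 2 = 0) ↔ ¬ (k % 2 = 0) := by omega
    tauto

lemma mem_pathRed_iff {e : Sym2 V} (hw2 : 2 ≤ w e) {x} :
    x ∈ pathRed w fst snd e ↔
      ∃ j, j % 2 = 0 ∧ j ≤ 2 * w e - 2 ∧ x = edgeAt w fst snd e j := by
  have h1 : ¬ (w e = 1) := by omega
  simp only [pathRed, if_neg h1, Finset.mem_insert, Finset.mem_image, Finset.mem_range]
  constructor
  · rintro (rfl | rfl | ⟨k, hk, rfl⟩)
    · exact ⟨0, by omega, by omega, by rw [edgeAt]⟩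
    · refine ⟨2 * w e - 2, by omega, le_refl _, ?_⟩
      have h2 : 2 * w e - 2 = (2 * w e - 3) + 1 := by omega
      rw [h2, edgeAt, if_pos (by omega)]
    · refine ⟨2 * k + 2, by omega, by omega, ?_⟩
      have h2 : 2 * k + 2 = (2 * k + 1) + 1 := by omega
      rw [h2, edgeAt, if_neg (by omega)]
  · rintro ⟨j, hj2, hjle, rfl⟩
    obtain ⟨k, rfl⟩ : ∃ k, j = k + k := (Nat.even_iff.mpr hj2)
    rcases Nat.eq_zero_or_pos k with rfl | hk0
    · exact Or.inl (by rw [edgeAt])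
    rcases eq_or_ne (k + k) (2 * w e - 2) with heq | hjne
    · refine Or.inr (Or.inl ?_)
      rw [heq]
      have h2 : 2 * w e - 2 = (2 * w e - 3) + 1 := by omega
      rw [h2, edgeAt, if_pos (by omega)]
    · refine Or.inr (Or.inr ⟨k - 1, by omega, ?_⟩)
      have h2 : k + k = (2 * (k - 1) + 1) + 1 := by omega
      rw [h2, edgeAt, if_neg (by omega)]

lemma mem_pathBlue_iff {e : Sym2 V} (hw2 : 2 ≤ w e) {x} :
    x ∈ pathBlue w e ↔
      ∃ j, j % 2 = 1 ∧ j ≤ 2 * w e - 2 ∧ x = edgeAt w fst snd e j := by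
  simp only [pathBlue, Finset.mem_image, Finset.mem_range]
  constructor
  · rintro ⟨k, hk, rfl⟩
    refine ⟨2 * k + 1, by omega, by omega, ?_⟩
    rw [edgeAt, if_neg (by omega)]
  · rintro ⟨j, hj2, hjle, rfl⟩
    obtain ⟨k, rfl⟩ : ∃ k, j = 2 * k + 1 := ⟨j / 2, by omega⟩
    refine ⟨k, by omega, ?_⟩
    rw [edgeAt, if_neg (by omega)]


def firstE (w : Sym2 V → ℕ) (fst snd : Sym2 V → V) (e : Sym2 V) :
    Sym2 (V ⊕ (Sym2 V × ℕ)) :=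
  if w e = 1 then s(Sum.inl (fst e), Sum.inl (snd e)) else s(Sum.inl (fst e), Sum.inr (e, 0))

lemma firstE_eq {e : Sym2 V} (h1 : w e ≠ 1) :
    firstE w fst snd e = edgeAt w fst snd e 0 := by
  rw [firstE, if_neg h1, edgeAt]

lemma firstE_mem_pathRed {e : Sym2 V} : firstE w fst snd e ∈ pathRed w fst snd e := by
  by_cases h1 : w e = 1 <;> simp [pathRed, firstE, h1]

lemma edgeAt_last {e : Sym2 V} (hw2 : 2 ≤ w e) :
    edgeAt w fst snd e (2 * w e - 2) = s(Sum.inr (e, 2 * w e - 3), Sum.inl (snd e)) := by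
  have h2 : 2 * w e - 2 = (2 * w e - 3) + 1 := by omega
  rw [h2, edgeAt, if_pos (by omega)]

lemma pathRed_subset_M' {M' : Finset (Sym2 (V ⊕ (Sym2 V × ℕ)))}
    (hM' : IsPMOn (SimpleGraph.fromRel (rel G w fst snd)) (valid G w) M')
    {e : Sym2 V} (he : e ∈ G.edgeSet) (hw1 : 1 ≤ w e) (hf : firstE w fst snd e ∈ M') :
    ∀ x ∈ pathRed w fst snd e, x ∈ M' := by
  intro x hx
  by_cases h1 : w e = 1
  · simp only [pathRed, if_pos h1, Finset.mem_singleton] at hx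
    rw [firstE, if_pos h1] at hf
    rwa [hx]
  · have hw2 : 2 ≤ w e := by omega
    obtain ⟨j, hj2, hjle, rfl⟩ := (mem_pathRed_iff hw2).mp hx
    rw [firstE_eq h1] at hf
    exact (alt hM' he hw2 hjle).mpr (iff_of_true hj2 hf)

lemma pathBlue_subset_M' {M' : Finset (Sym2 (V ⊕ (Sym2 V × ℕ)))}
    (hM' : IsPMOn (SimpleGraph.fromRel (rel G w fst snd)) (valid G w) M')
    {e : Sym2 V} (he : e ∈ G.edgeSet) (hw2 : 2 ≤ w e)
    (hf : firstE w fst snd e ∉ M') :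
    ∀ x ∈ pathBlue w e, x ∈ M' := by
  intro x hx
  obtain ⟨j, hj2, hjle, rfl⟩ := (mem_pathBlue_iff (fst := fst) (snd := snd) hw2).mp hx
  rw [firstE_eq (by omega)] at hf
  exact (alt hM' he hw2 hjle).mpr (iff_of_false (by omega) hf)

lemma firstE_mem_of {M' : Finset (Sym2 (V ⊕ (Sym2 V × ℕ)))}
    (hM' : IsPMOn (SimpleGraph.fromRel (rel G w fst snd)) (valid G w) M')
    {e : Sym2 V} (he : e ∈ G.edgeSet) (hw2 : 2 ≤ w e) {j : ℕ}
    (hjle : j ≤ 2 * w e - 2) (hjpar : j % 2 = 0)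
    (h : edgeAt w fst snd e j ∈ M') : firstE w fst snd e ∈ M' := by
  rw [firstE_eq (by omega)]
  exact ((alt hM' he hw2 hjle).mp h).mp hjpar

lemma exists_inr_mem_pathRed {e : Sym2 V} {x} (h1 : w e ≠ 1)
    (hx : x ∈ pathRed w fst snd e) : ∃ i, Sum.inr (e, i) ∈ x := by
  simp only [pathRed, if_neg h1, Finset.mem_insert, Finset.mem_image, Finset.mem_range] at hx
  rcases hx with rfl | rfl | ⟨k, -, rfl⟩
  · exact ⟨0, by simp⟩
  · exact ⟨2 * w e - 3, by simp⟩
  · exact ⟨2 * k + 1, by simp⟩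

include hfs in
lemma pathRed_disjoint {e1 e2 : Sym2 V} (hne : e1 ≠ e2) :
    Disjoint (pathRed w fst snd e1) (pathRed w fst snd e2) := by
  rw [Finset.disjoint_left]
  intro x hx1 hx2
  by_cases h1 : w e1 = 1
  · by_cases h2 : w e2 = 1
    · simp only [pathRed, if_pos h1, Finset.mem_singleton] at hx1
      simp only [pathRed, if_pos h2, Finset.mem_singleton] at hx2
      rw [hx1] at hx2
      rw [Sym2.eq_iff] at hx2
      apply hne
      rw [← hfs e1, ← hfs e2, Sym2.eq_iff]
      rcases hx2 with ⟨ha, hb⟩ | ⟨ha, hb⟩ <;> simp_all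
    · obtain ⟨i, hi⟩ := exists_inr_mem_pathRed h2 hx2
      have := inr_mem_pathRed hx1 hi
      simp_all
  · obtain ⟨i, hi⟩ := exists_inr_mem_pathRed h1 hx1
    have := inr_mem_pathRed hx2 hi
    simp_all

lemma card_pathRed {e : Sym2 V} (hw1 : 1 ≤ w e) :
    (pathRed w fst snd e).card = w e := by
  by_cases h1 : w e = 1
  · simp [pathRed, h1]
  · have hw2 : 2 ≤ w e := by omega
    rw [pathRed, if_neg h1]
    rw [Finset.card_insert_of_notMem (by simp [Sym2.eq_iff]; omega),
      Finset.card_insert_of_notMem (by simp [Sym2.eq_iff]),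
      Finset.card_image_of_injective _ (fun a b hab => by
        simp [Sym2.eq_iff] at hab; omega),
      Finset.card_range]
    omega

lemma pathRed_subset_red {e : Sym2 V} (he : e ∈ G.edgeSet) (hw1 : 1 ≤ w e) {x}
    (hx : x ∈ pathRed w fst snd e) : x ∈ red G w fst snd := by
  by_cases h1 : w e = 1
  · simp only [pathRed, if_pos h1, Finset.mem_singleton] at hx
    exact ⟨e, he, Or.inl ⟨h1, hx⟩⟩
  · have hw2 : 2 ≤ w e := by omega
    simp only [pathRed, if_neg h1, Finset.mem_insert, Finset.mem_image, Finset.mem_range] at hx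
    rcases hx with rfl | rfl | ⟨k, hk, rfl⟩
    · exact ⟨e, he, Or.inr (Or.inl ⟨hw2, rfl⟩)⟩
    · exact ⟨e, he, Or.inr (Or.inr (Or.inl ⟨hw2, rfl⟩))⟩
    · refine ⟨e, he, Or.inr (Or.inr (Or.inr ⟨2 * k + 1, by omega, by omega, ?_⟩))⟩
      norm_num

lemma pathBlue_not_red {e : Sym2 V} {x} (hx : x ∈ pathBlue w e) :
    x ∉ red G w fst snd := by
  simp only [pathBlue, Finset.mem_image, Finset.mem_range] at hx
  obtain ⟨k, -, rfl⟩ := hx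
  rintro ⟨e', he', h | h | h | ⟨i, hi1, hi2, h⟩⟩ <;>
    rw [Sym2.eq_iff] at h <;> simp_all <;> omega


include hfs in
lemma covering_edge {M' : Finset (Sym2 (V ⊕ (Sym2 V × ℕ)))}
    (hM' : IsPMOn (SimpleGraph.fromRel (rel G w fst snd)) (valid G w) M')
    (hw : ∀ e ∈ G.edgeSet, 1 ≤ w e) (v : V) :
    ∃! e, (e ∈ G.edgeSet ∧ firstE w fst snd e ∈ M') ∧ v ∈ e := by
  obtain ⟨f, ⟨hfM, hfv⟩, hfu⟩ := hM'.2 (Sum.inl v) trivial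
  have key : ∀ e'', e'' ∈ G.edgeSet → firstE w fst snd e'' ∈ M' → v ∈ e'' →
      ((∃ i, Sum.inr (e'', i) ∈ f) ∨ f = s(Sum.inl (fst e''), Sum.inl (snd e''))) := by
    intro e'' he hfe hv
    rcases (mem_e_iff hfs).mp hv with hv | hv
    · by_cases h1 : w e'' = 1
      · rw [firstE, if_pos h1] at hfe
        exact Or.inr (hfu _ ⟨hfe, by rw [hv]; simp⟩).symm
      · rw [firstE, if_neg h1] at hfe
        have hfeq : f = s(Sum.inl (fst e''), Sum.inr (e'', 0)) :=
          (hfu _ ⟨hfe, by rw [hv]; simp⟩).symm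
        exact Or.inl ⟨0, by rw [hfeq]; simp⟩
    · by_cases h1 : w e'' = 1
      · rw [firstE, if_pos h1] at hfe
        exact Or.inr (hfu _ ⟨hfe, by rw [hv]; simp⟩).symm
      · have hw2 : 2 ≤ w e'' := by have := hw e'' he; omega
        have hlast : edgeAt w fst snd e'' (2 * w e'' - 2) ∈ M' := by
          rw [firstE_eq h1] at hfe
          exact (alt hM' he hw2 (le_refl _)).mpr (iff_of_true (by omega) hfe)
        rw [edgeAt_last hw2] at hlast
        have hfeq : f = s(Sum.inr (e'', 2 * w e'' - 3), Sum.inl (snd e'')) :=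
          (hfu _ ⟨hlast, by rw [hv]; simp⟩).symm
        exact Or.inl ⟨2 * w e'' - 3, by rw [hfeq]; simp⟩
  obtain ⟨x, hadj, hfeq⟩ := exists_eq_of_mem (hM'.1 hfM) hfv
  have main : ∃ e, (e ∈ G.edgeSet ∧ firstE w fst snd e ∈ M') ∧ v ∈ e := by
    rw [adj_iff] at hadj
    obtain ⟨-, hrel⟩ := hadj
    rcases x with u | ⟨e, i⟩
    · obtain ⟨hadj', h1⟩ := hrel
      refine ⟨s(v, u), ⟨hadj', ?_⟩, by simp⟩
      rw [firstE, if_pos h1]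
      have h2 := hfs s(v, u)
      rw [Sym2.eq_iff] at h2
      rcases h2 with ⟨ha, hb⟩ | ⟨ha, hb⟩
      · rw [ha, hb, ← hfeq]; exact hfM
      · rw [ha, hb, Sym2.eq_swap, ← hfeq]; exact hfM
    · obtain ⟨he, hw2, hcase⟩ := hrel
      rcases hcase with ⟨hv1, hi⟩ | ⟨hv1, hi⟩
      · refine ⟨e, ⟨he, ?_⟩, by rw [mem_e_iff hfs]; exact Or.inl hv1⟩
        rw [firstE, if_neg (by omega), ← hv1, ← hi, ← hfeq]
        exact hfM
      · subst hv1; subst hi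
        refine ⟨e, ⟨he, ?_⟩, by rw [mem_e_iff hfs]; exact Or.inr rfl⟩
        refine firstE_mem_of hM' he hw2 (le_refl _) (by omega) ?_
        rw [edgeAt_last hw2, Sym2.eq_swap, ← hfeq]
        exact hfM
  obtain ⟨e, ⟨he, hfe⟩, hve⟩ := main
  refine ⟨e, ⟨⟨he, hfe⟩, hve⟩, ?_⟩
  rintro e' ⟨⟨he', hfe'⟩, hve'⟩
  have k1 := key e' he' hfe' hve'
  have k2 := key e he hfe hve
  rcases k1 with ⟨i, hi⟩ | hA1 <;> rcases k2 with ⟨j, hj⟩ | hA2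
  · rw [hfeq, Sym2.mem_iff] at hi hj
    rcases hi with hi | hi
    · simp at hi
    rcases hj with hj | hj
    · simp at hj
    rw [← hj] at hi
    have h3 := Sum.inr.inj hi
    exact (Prod.ext_iff.mp h3).1
  · rw [hA2] at hi; simp [Sym2.mem_iff] at hi
  · rw [hA1] at hj; simp [Sym2.mem_iff] at hj
  · rw [hA1] at hA2
    rw [Sym2.eq_iff] at hA2
    rw [← hfs e', ← hfs e, Sym2.eq_iff]
    rcases hA2 with ⟨ha, hb⟩ | ⟨ha, hb⟩ <;> simp_all


lemma finite_of_cover {M : Finset (Sym2 V)} (h : ∀ v : V, ∃ e ∈ M, v ∈ e) : Finite V := by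
  have hfin : (Set.univ : Set V).Finite := by
    have hsub : (Set.univ : Set V) ⊆ ⋃ e ∈ (M : Set (Sym2 V)), {v | v ∈ e} := by
      intro v _
      obtain ⟨e, heM, hv⟩ := h v
      exact Set.mem_biUnion heM hv
    refine Set.Finite.subset (Set.Finite.biUnion M.finite_toSet fun e _ => ?_) hsub
    induction e using Sym2.ind with
    | _ a b =>
      refine ((Set.finite_singleton b).insert a).subset fun v hv => ?_
      rw [Set.mem_setOf_eq, Sym2.mem_iff] at hv
      simpa using hv
  exact Set.finite_univ_iff.mp hfin

include hfs in
lemma firstE_injective : Function.Injective (firstE w fst snd) := by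
  intro e1 e2 h
  by_cases h1 : w e1 = 1 <;> by_cases h2 : w e2 = 1 <;>
      simp only [firstE, h1, h2, if_true, if_false, ite_true, ite_false] at h <;>
      rw [Sym2.eq_iff] at h
  · rw [← hfs e1, ← hfs e2, Sym2.eq_iff]
    simp only [Sum.inl.injEq] at h
    tauto
  · simp at h
  · simp at h
  · simp only [Sum.inl.injEq, Sum.inr.injEq, Prod.mk.injEq] at h
    tauto

include hfs in
lemma red_inter_eq {M' : Finset (Sym2 (V ⊕ (Sym2 V × ℕ)))}
    (hM' : IsPMOn (SimpleGraph.fromRel (rel G w fst snd)) (valid G w) M')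
    (hw : ∀ e ∈ G.edgeSet, 1 ≤ w e) {M : Finset (Sym2 V)}
    (hMdef : ∀ e, e ∈ M ↔ (e ∈ G.edgeSet ∧ firstE w fst snd e ∈ M')) :
    (↑M' : Set (Sym2 (V ⊕ (Sym2 V × ℕ)))) ∩ red G w fst snd =
      ↑(M.biUnion (pathRed w fst snd)) := by
  ext x
  simp only [Set.mem_inter_iff, Finset.mem_coe, Finset.mem_biUnion]
  constructor
  · rintro ⟨hxM', hxr⟩
    obtain ⟨e, he, hcase⟩ := hxr
    rcases hcase with ⟨h1, rfl⟩ | ⟨hw2, rfl⟩ | ⟨hw2, rfl⟩ | ⟨i, hodd, hile, rfl⟩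
    · refine ⟨e, (hMdef e).mpr ⟨he, by rwa [firstE, if_pos h1]⟩, ?_⟩
      simp [pathRed, h1]
    · refine ⟨e, (hMdef e).mpr ⟨he, by rwa [firstE, if_neg (by omega)]⟩, ?_⟩
      rw [pathRed, if_neg (by omega : ¬ w e = 1)]; simp
    · refine ⟨e, (hMdef e).mpr ⟨he,
        firstE_mem_of hM' he hw2 (le_refl _) (by omega)
          (by rw [edgeAt_last hw2]; exact hxM')⟩, ?_⟩
      rw [pathRed, if_neg (by omega : ¬ w e = 1)]; simp
    · have hw2 : 2 ≤ w e := by omega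
      have hx : s(Sum.inr (e, i), Sum.inr (e, i + 1)) = edgeAt w fst snd e (i + 1) := by
        rw [edgeAt, if_neg (by omega)]
      refine ⟨e, (hMdef e).mpr ⟨he,
        firstE_mem_of hM' he hw2 (j := i + 1) (by omega) (by omega)
          (by rw [← hx]; exact hxM')⟩, ?_⟩
      rw [mem_pathRed_iff hw2]
      exact ⟨i + 1, by omega, by omega, hx⟩
  · rintro ⟨e, heM, hx⟩
    obtain ⟨he, hfe⟩ := (hMdef e).mp heM
    exact ⟨pathRed_subset_M' hM' he (hw e he) hfe x hx,
      pathRed_subset_red he (hw e he) hx⟩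

end SubAux

open Subdivide SubAux in
/-- Reduction EWPM ≤ EM (Gurjar et al.): replacing each edge `e` (of positive weight
`w e`) by a red/blue alternating path of length `2·w(e) − 1` starting and ending with
red, the graph `G` has a perfect matching of total weight exactly `W` iff the subdivided
graph has a perfect matching with exactly `W` red edges. -/
theorem stmt_15 {V : Type*} [DecidableEq V] (G : SimpleGraph V)
    (w : Sym2 V → ℕ) (hw : ∀ e ∈ G.edgeSet, 1 ≤ w e)
    (fst snd : Sym2 V → V) (hfs : ∀ e : Sym2 V, s(fst e, snd e) = e)
    (W : ℕ) :
    (∃ M : Finset (Sym2 V), IsPMOn G (fun _ => True) M ∧ ∑ e ∈ M, w e = W) ↔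
    (∃ M' : Finset (Sym2 (V ⊕ (Sym2 V × ℕ))),
      IsPMOn (SimpleGraph.fromRel (rel G w fst snd)) (valid G w) M' ∧
      ((M' : Set (Sym2 (V ⊕ (Sym2 V × ℕ)))) ∩ red G w fst snd).ncard = W) := by
  classical
  constructor
  · rintro ⟨M, hM, rfl⟩
    have hfin : Finite V := finite_of_cover (fun v => by
      obtain ⟨e, ⟨heM, hv⟩, -⟩ := hM.2 v trivial; exact ⟨e, heM, hv⟩)
    have hEfin : G.edgeSet.Finite := Set.toFinite _
    set F : Finset (Sym2 V) := hEfin.toFinset with hF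
    set M' : Finset (Sym2 (V ⊕ (Sym2 V × ℕ))) :=
      M.biUnion (pathRed w fst snd) ∪ (F \ M).biUnion (pathBlue w) with hM'def
    have hmem : ∀ x, x ∈ M' ↔ ((∃ e ∈ M, x ∈ pathRed w fst snd e) ∨
        (∃ e, (e ∈ G.edgeSet ∧ e ∉ M) ∧ x ∈ pathBlue w e)) := by
      intro x
      simp only [hM'def, Finset.mem_union, Finset.mem_biUnion, Finset.mem_sdiff, hF,
        Set.Finite.mem_toFinset]
    have hwM : ∀ e ∈ M, 1 ≤ w e := fun e he => hw e (hM.1 he)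
    refine ⟨M', ⟨?_, ?_⟩, ?_⟩
    · intro x hx
      rcases (hmem x).mp hx with ⟨e, heM, hx'⟩ | ⟨e, ⟨heE, -⟩, hx'⟩
      · exact pathRed_subset_edgeSet hfs (hM.1 heM) (hwM e heM) hx'
      · exact pathBlue_subset_edgeSet heE hx'
    · rintro (v | ⟨e, i⟩) ht
      · obtain ⟨e0, ⟨he0M, hv0⟩, hu0⟩ := hM.2 v trivial
        obtain ⟨x, hxp, hxv⟩ := pathRed_inl_exists (w := w) ((mem_e_iff hfs).mp hv0)
        refine ⟨x, ⟨(hmem x).mpr (Or.inl ⟨e0, he0M, hxp⟩), hxv⟩, ?_⟩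
        rintro y ⟨hyM', hyv⟩
        rcases (hmem y).mp hyM' with ⟨e', he'M, hy⟩ | ⟨e', -, hy⟩
        · have hve' : v ∈ e' := (mem_e_iff hfs).mpr (inl_mem_pathRed hy hyv)
          have he'e0 : e' = e0 := hu0 e' ⟨he'M, hve'⟩
          subst he'e0
          exact pathRed_inl_unique (fst_ne_snd hfs (hM.1 he0M)) hy hxp hyv hxv
        · exact absurd hyv (not_inl_mem_pathBlue hy)
      · have ht' : e ∈ G.edgeSet ∧ 2 ≤ w e ∧ i ≤ 2 * w e - 3 := ht
        obtain ⟨he, hw2, hi⟩ := ht'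
        by_cases heM : e ∈ M
        · obtain ⟨x, hxp, hxv⟩ := pathRed_inr_exists (fst := fst) (snd := snd) hw2 hi
          refine ⟨x, ⟨(hmem x).mpr (Or.inl ⟨e, heM, hxp⟩), hxv⟩, ?_⟩
          rintro y ⟨hyM', hyv⟩
          rcases (hmem y).mp hyM' with ⟨e', he'M, hy⟩ | ⟨e', ⟨-, he'M⟩, hy⟩
          · have hee' : e = e' := inr_mem_pathRed hy hyv
            subst hee'
            exact pathRed_inr_unique hw2 hy hxp hyv hxv
          · have hee' : e = e' := inr_mem_pathBlue hy hyv
            subst hee'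
            exact absurd heM he'M
        · obtain ⟨x, hxp, hxv⟩ := pathBlue_inr_exists hw2 hi
          refine ⟨x, ⟨(hmem x).mpr (Or.inr ⟨e, ⟨he, heM⟩, hxp⟩), hxv⟩, ?_⟩
          rintro y ⟨hyM', hyv⟩
          rcases (hmem y).mp hyM' with ⟨e', he'M, hy⟩ | ⟨e', -, hy⟩
          · have hee' : e = e' := inr_mem_pathRed hy hyv
            subst hee'
            exact absurd he'M heM
          · have hee' : e = e' := inr_mem_pathBlue hy hyv
            subst hee'
            exact pathBlue_inr_unique hy hxp hyv hxv
    · have hset : (↑M' : Set (Sym2 (V ⊕ (Sym2 V × ℕ)))) ∩ red G w fst snd =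
          ↑(M.biUnion (pathRed w fst snd)) := by
        ext x
        simp only [Set.mem_inter_iff, Finset.mem_coe, Finset.mem_biUnion]
        constructor
        · rintro ⟨hxM', hxr⟩
          rcases (hmem x).mp hxM' with ⟨e, heM, hx⟩ | ⟨e, -, hx⟩
          · exact ⟨e, heM, hx⟩
          · exact absurd hxr (pathBlue_not_red hx)
        · rintro ⟨e, heM, hx⟩
          exact ⟨(hmem x).mpr (Or.inl ⟨e, heM, hx⟩),
            pathRed_subset_red (hM.1 heM) (hwM e heM) hx⟩
      rw [hset, Set.ncard_coe_finset,
        Finset.card_biUnion (fun e1 _ e2 _ hne => pathRed_disjoint hfs hne)]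
      exact Finset.sum_congr rfl fun e he => card_pathRed (hwM e he)
  · rintro ⟨M', hM', hcount⟩
    have hSfin : {e | e ∈ G.edgeSet ∧ firstE w fst snd e ∈ M'}.Finite := by
      refine Set.Finite.subset
        (Set.Finite.preimage ((firstE_injective (w := w) hfs).injOn) M'.finite_toSet) ?_
      intro e he; exact he.2
    set M : Finset (Sym2 V) := hSfin.toFinset with hMdef
    have hmemM : ∀ e, e ∈ M ↔ (e ∈ G.edgeSet ∧ firstE w fst snd e ∈ M') := fun e => by
      rw [hMdef, Set.Finite.mem_toFinset]; rfl
    refine ⟨M, ⟨fun e he => ((hmemM e).mp he).1, fun v _ => ?_⟩, ?_⟩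
    · obtain ⟨e, ⟨hP, hv⟩, hu⟩ := covering_edge hfs hM' hw v
      exact ⟨e, ⟨(hmemM e).mpr hP, hv⟩, fun e' ⟨h1, h2⟩ => hu e' ⟨(hmemM e').mp h1, h2⟩⟩
    · rw [red_inter_eq hfs hM' hw hmemM, Set.ncard_coe_finset,
        Finset.card_biUnion (fun e1 _ e2 _ hne => pathRed_disjoint hfs hne)] at hcount
      rw [← hcount]
      exact Finset.sum_congr rfl fun e he => (card_pathRed (hw e ((hmemM e).mp he).1)).symm
end

section
/- Let M* be an optimal perfect matching for the minimum top-k weight objective, let t = w(e_k) where e_k is the k-th heaviest edge of M*, and let M be any perfect matching with w_t(M) ≤ w_t(M*), where w_t(e) = max(w(e) − t, 0). Then w^k(M) ≤ w^k(M*), i.e., M is also optimal for the minimum top-k objective. -/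
/-- The top-`k` weight of a multiset of natural numbers:
the sum of its `k` largest elements. -/
def topk (S : Multiset ℕ) (k : ℕ) : ℕ :=
  ((S.sort (· ≤ ·)).reverse.take k).sum

/-- The elements of a multiset of naturals, sorted in decreasing order. -/
def sortedDesc (S : Multiset ℕ) : List ℕ :=
  (S.sort (· ≤ ·)).reverse

/-- `M` is a perfect matching of `G`, viewed as a finite set of edges:
its edges are edges of `G` and every vertex lies on exactly one of them. -/
def IsPM {V : Type*} (G : SimpleGraph V) (M : Finset (Sym2 V)) : Prop :=
  (↑M : Set (Sym2 V)) ⊆ G.edgeSet ∧ ∀ v : V, ∃! e, e ∈ M ∧ v ∈ e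

private lemma sum_take_le_thresh (t : ℕ) : ∀ (l : List ℕ) (k : ℕ),
    (l.take k).sum ≤ (l.map (fun x => x - t)).sum + k * t := by
  intro l
  induction l with
  | nil => intro k; simp
  | cons x tl ih =>
    intro k
    cases k with
    | zero => simp
    | succ k =>
      have h1 := ih k
      simp only [List.take_succ_cons, List.sum_cons, List.map_cons, Nat.succ_mul]
      have hx : x ≤ (x - t) + t := by omega
      omega

private lemma sum_thresh_eq (t : ℕ) : ∀ m : List ℕ, (∀ x ∈ m, t ≤ x) →
    (m.map (fun x => x - t)).sum + m.length * t = m.sum := by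
  intro m
  induction m with
  | nil => simp
  | cons x tl ih =>
    intro h
    simp only [List.map_cons, List.sum_cons, List.length_cons, Nat.succ_mul]
    have hx : t ≤ x := h x List.mem_cons_self
    have := ih (fun y hy => h y (List.mem_cons_of_mem _ hy))
    omega

private lemma sorted_desc_bound (l : List ℕ) (hs : l.Pairwise (· ≥ ·)) (k t : ℕ)
    (hk1 : 1 ≤ k) (hkl : k ≤ l.length) (ht : t = l.getD (k - 1) 0) :
    (l.map (fun x => x - t)).sum + k * t ≤ (l.take k).sum := by
  have hlen : (l.take k).length = k := List.length_take_of_le hkl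
  have hget : t = l[k - 1]'(by omega) := by
    rw [ht, List.getD_eq_getElem _ _ (by omega)]
  have hmono : ∀ i j : ℕ, (hij : i ≤ j) → (hj : j < l.length) →
      l[j] ≤ l[i]'(by omega) := by
    intro i j hij hj
    rcases Nat.lt_or_ge i j with h | h
    · exact hs.rel_get_of_lt (a := ⟨i, by omega⟩) (b := ⟨j, hj⟩) (by simpa [Fin.lt_def])
    · have : i = j := by omega
      subst this; exact le_refl _
  have htake : ∀ x ∈ l.take k, t ≤ x := by
    intro x hx
    obtain ⟨i, hi, rfl⟩ := List.mem_iff_getElem.mp hx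
    rw [List.getElem_take]
    have hik : i < k := by rw [hlen] at hi; exact hi
    have hil : i < l.length := by omega
    rw [hget]
    exact hmono i (k - 1) (by omega) (by omega)
  have hdrop : ∀ x ∈ l.drop k, x ≤ t := by
    intro x hx
    obtain ⟨i, hi, rfl⟩ := List.mem_iff_getElem.mp hx
    rw [List.getElem_drop]
    rw [hget]
    have hlen' : (l.drop k).length = l.length - k := List.length_drop
    exact hmono (k - 1) (k + i) (by omega) (by omega)
  have hdropsum : ((l.drop k).map (fun x => x - t)).sum = 0 := by
    apply List.sum_eq_zero
    intro y hy
    obtain ⟨x, hx, rfl⟩ := List.mem_map.mp hy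
    have := hdrop x hx; omega
  have htakesum : ((l.take k).map (fun x => x - t)).sum + k * t = (l.take k).sum := by
    have := sum_thresh_eq t (l.take k) htake
    rw [hlen] at this; exact this
  have hsplit : (l.map (fun x => x - t)).sum
      = ((l.take k).map (fun x => x - t)).sum + ((l.drop k).map (fun x => x - t)).sum := by
    conv_lhs => rw [← List.take_append_drop k l]
    rw [List.map_append, List.sum_append]
  omega

private lemma map_sortedDesc_sum (S : Multiset ℕ) (f : ℕ → ℕ) :
    ((sortedDesc S).map f).sum = (S.map f).sum := by
  have h1 : ((sortedDesc S : List ℕ) : Multiset ℕ) = S := by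
    unfold sortedDesc
    rw [Multiset.coe_reverse, Multiset.sort_eq]
  calc ((sortedDesc S).map f).sum
      = ((((sortedDesc S : List ℕ) : Multiset ℕ)).map f).sum := by
        rw [Multiset.map_coe, Multiset.sum_coe]
    _ = (S.map f).sum := by rw [h1]

/-- Core of `minTkPM ≡ minWPM`: if `M*` is optimal for the minimum top-`k` objective,
`t` is the weight of the `k`-th heaviest edge of `M*`, and `M` is a perfect matching whose
total thresholded weight is at most that of `M*`, then `M` is also optimal, i.e.
`w^k(M) ≤ w^k(M*)`. -/
theorem stmt_16 {V : Type*} [DecidableEq V] (G : SimpleGraph V)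
    (w : Sym2 V → ℕ) (k : ℕ)
    (Mstar M : Finset (Sym2 V)) (hMs : IsPM G Mstar) (hM : IsPM G M)
    (hopt : ∀ N : Finset (Sym2 V), IsPM G N →
      topk (Mstar.val.map w) k ≤ topk (N.val.map w) k)
    (hk : k ≤ Mstar.card)
    (t : ℕ) (ht : t = (sortedDesc (Mstar.val.map w)).getD (k - 1) 0)
    (hthr : ∑ e ∈ M, (w e - t) ≤ ∑ e ∈ Mstar, (w e - t)) :
    topk (M.val.map w) k ≤ topk (Mstar.val.map w) k := by
  rcases Nat.eq_zero_or_pos k with rfl | hk1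
  · simp [topk]
  set A := Mstar.val.map w with hA
  set B := M.val.map w with hB
  have hLA : (sortedDesc A).Pairwise (· ≥ ·) := by
    unfold sortedDesc
    exact List.pairwise_reverse.mpr (Multiset.pairwise_sort A (· ≤ ·))
  have hLAlen : (sortedDesc A).length = Mstar.card := by
    unfold sortedDesc
    rw [List.length_reverse, Multiset.length_sort, hA, Multiset.card_map]
    rfl
  -- sums over finsets equal thresholded sums over sorted lists
  have hsumM : ((sortedDesc B).map (fun x => x - t)).sum = ∑ e ∈ M, (w e - t) := by
    rw [map_sortedDesc_sum, hB, Multiset.map_map]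
    rfl
  have hsumMs : ((sortedDesc A).map (fun x => x - t)).sum = ∑ e ∈ Mstar, (w e - t) := by
    rw [map_sortedDesc_sum, hA, Multiset.map_map]
    rfl
  have step1 : topk B k ≤ ((sortedDesc B).map (fun x => x - t)).sum + k * t :=
    sum_take_le_thresh t (sortedDesc B) k
  have step3 : ((sortedDesc A).map (fun x => x - t)).sum + k * t ≤ topk A k :=
    sorted_desc_bound (sortedDesc A) hLA k t hk1 (by omega) ht
  have : topk B k ≤ topk A k := by
    calc topk B k ≤ ((sortedDesc B).map (fun x => x - t)).sum + k * t := step1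
      _ = (∑ e ∈ M, (w e - t)) + k * t := by rw [hsumM]
      _ ≤ (∑ e ∈ Mstar, (w e - t)) + k * t := by omega
      _ = ((sortedDesc A).map (fun x => x - t)).sum + k * t := by rw [hsumMs]
      _ ≤ topk A k := step3
  exact this
end
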